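/- arXiv:1002.4350 — 4 statements merged into one kernel-verified Lean document; each statement's English description precedes it below -/
import Mathlib

section
/- Let (Γ,w) be a connected weighted graph of genus g ≥ 2 and d a multidegree of total degree d. If d_A ≥ m_A(d) for every subset A ⊆ V whose induced sub-multigraph is connected, then d_A ≥ m_A(d) for every subset A ⊆ V; that is, d is balanced. -/
open Finset

noncomputable section
open scoped Classical

variable {V : Type} [Fintype V] [DecidableEq V]

/-- The simple graph underlying a multigraph with multiplicity function `k`:
`u` and `v` are adjacent iff `u ≠ v` and some edge joins them. -/
def graphOf (k : V → V → ℕ) : SimpleGraph V where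
  Adj u v := u ≠ v ∧ (0 < k u v ∨ 0 < k v u)
  symm := ⟨fun u v h => ⟨h.1.symm, h.2.symm⟩⟩
  loopless := ⟨fun v h => h.1 rfl⟩

/-- The number of edges of a multigraph: loops plus half the ordered count. -/
def numEdges (k : V → V → ℕ) : ℕ :=
  (∑ v, k v v) + (∑ u, ∑ v ∈ Finset.univ.erase u, k u v) / 2

/-- The genus of a weighted graph: `∑ w(v) + b₁`, with `b₁ = #E - #V + 1`. -/
def genus (k : V → V → ℕ) (w : V → ℕ) : ℤ :=
  (∑ v, (w v : ℤ)) + ((numEdges k : ℤ) - (Fintype.card V : ℤ) + 1)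

/-- Stability: connected, and each weight-zero vertex has valency at least 3. -/
def IsStable (k : V → V → ℕ) (w : V → ℕ) : Prop :=
  (graphOf k).Connected ∧
    ∀ v, w v = 0 → 3 ≤ 2 * k v v + ∑ u ∈ Finset.univ.erase v, k u v

/-- `δ_A`: the number of edges joining `A` to its complement. -/
def deltaA (k : V → V → ℕ) (A : Finset V) : ℤ :=
  ∑ u ∈ A, ∑ v ∈ Aᶜ, (k u v : ℤ)

/-- `w_A = Σ_{v∈A} (2w(v) − 2 + 2k(v,v) + Σ_{u≠v} k(u,v))`. -/
def wA (k : V → V → ℕ) (w : V → ℕ) (A : Finset V) : ℤ :=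
  ∑ v ∈ A, (2 * (w v : ℤ) - 2 + 2 * (k v v : ℤ) + ∑ u ∈ Finset.univ.erase v, (k u v : ℤ))

/-- `d_A`: the total degree of a multidegree on the subset `A`. -/
def degA (d : V → ℤ) (A : Finset V) : ℤ := ∑ v ∈ A, d v

/-- `m_A(d) = d·w_A/(2g−2) − δ_A/2 ∈ ℚ`. -/
def mA (k : V → V → ℕ) (w : V → ℕ) (D : ℤ) (A : Finset V) : ℚ :=
  (D : ℚ) * (wA k w A : ℚ) / ((2 * genus k w - 2 : ℤ) : ℚ) - (deltaA k A : ℚ) / 2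

/-- A balanced multidegree of total degree `D`. -/
def IsBalanced (k : V → V → ℕ) (w : V → ℕ) (D : ℤ) (d : V → ℤ) : Prop :=
  degA d Finset.univ = D ∧ ∀ A : Finset V, mA k w D A ≤ (degA d A : ℚ)

/-- A strictly balanced multidegree of total degree `D`. -/
def IsStrictlyBalanced (k : V → V → ℕ) (w : V → ℕ) (D : ℤ) (d : V → ℤ) : Prop :=
  IsBalanced k w D d ∧
    ∀ A : Finset V, A ≠ ∅ → A ≠ Finset.univ → mA k w D A < (degA d A : ℚ)

/-- `(Γ,w)` is `d`-general if every balanced multidegree of total degree `d`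
is strictly balanced. -/
def IsDGeneral (k : V → V → ℕ) (w : V → ℕ) (D : ℤ) : Prop :=
  ∀ d : V → ℤ, IsBalanced k w D d → IsStrictlyBalanced k w D d

/-- The generator `c_v` of the lattice `Λ`. -/
def cvec (k : V → V → ℕ) (v : V) : V → ℤ := fun u =>
  if u = v then -(∑ x ∈ Finset.univ.erase v, (k x v : ℤ)) else (k u v : ℤ)

/-- The lattice `Λ ⊆ ℤ^V` generated by the `c_v`. -/
def Lambda (k : V → V → ℕ) : AddSubgroup (V → ℤ) :=
  AddSubgroup.closure (Set.range (cvec k))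

/-- The total-degree homomorphism `ℤ^V → ℤ`. -/
def sumHom (V : Type) [Fintype V] : (V → ℤ) →+ ℤ :=
  { toFun := fun d => ∑ v, d v
    map_zero' := by simp
    map_add' := fun a b => by simp [Finset.sum_add_distrib] }

/-- `Z = {d ∈ ℤ^V : Σ_v d(v) = 0}`. -/
def Zsub (V : Type) [Fintype V] : AddSubgroup (V → ℤ) := (sumHom V).ker

/-- Remove the edge(s) joining `a` and `b` from the multigraph. -/
def removeEdge (k : V → V → ℕ) (a b : V) : V → V → ℕ := fun u v =>
  if (u = a ∧ v = b) ∨ (u = b ∧ v = a) then 0 else k u v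

/-- `a`–`b` is a bridge: a single non-loop edge whose removal disconnects the graph. -/
def IsBridge (k : V → V → ℕ) (a b : V) : Prop :=
  a ≠ b ∧ k a b = 1 ∧ ¬ (graphOf (removeEdge k a b)).Connected

/-- `A` induces a connected sub-multigraph. -/
def IsConnectedSubset (k : V → V → ℕ) (A : Finset V) : Prop :=
  ((graphOf k).induce (A : Set V)).Connected

/-- The equivalence relation `≈` on `V` generated by bridges. -/
def contractSetoid (k : V → V → ℕ) : Setoid V :=
  ⟨Relation.EqvGen (fun u v => IsBridge k u v), Relation.EqvGen.is_equivalence _⟩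

/-- The vertex set `V² = V/≈` of the contracted graph `Γ²`. -/
def V2 (k : V → V → ℕ) : Type := Quotient (contractSetoid k)

instance (k : V → V → ℕ) : Finite (V2 k) := Quotient.finite _

instance (k : V → V → ℕ) : Fintype (V2 k) := Fintype.ofFinite _

/-- The fiber of the quotient map `φ : V → V²` over a class `c`. -/
def fiber (k : V → V → ℕ) (c : V2 k) : Finset V :=
  Finset.univ.filter (fun v => Quotient.mk (contractSetoid k) v = c)

/-- The multiplicity function `k²` of the contracted graph `Γ²`. -/
def k2 (k : V → V → ℕ) : V2 k → V2 k → ℕ := fun c c' =>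
  if c = c' then
    (∑ v ∈ fiber k c, k v v) +
      (∑ u ∈ fiber k c, ∑ v ∈ (fiber k c).erase u,
        if IsBridge k u v then 0 else k u v) / 2
  else ∑ u ∈ fiber k c, ∑ v ∈ fiber k c', k u v

/-- The weight function `w²` of the contracted weighted graph `(Γ²,w²)`. -/
def w2 (k : V → V → ℕ) (w : V → ℕ) : V2 k → ℕ := fun c => ∑ v ∈ fiber k c, w v

/-- The pushforward `α(d)` of a multidegree to the contracted graph. -/
def alphaMap (k : V → V → ℕ) (d : V → ℤ) : V2 k → ℤ := fun c => ∑ v ∈ fiber k c, d v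

/-- The setoid on multidegrees of total degree `D`: two are equivalent if their
difference lies in `Λ`; the quotient is `Δ^d`. -/
def degSetoid (k : V → V → ℕ) (D : ℤ) : Setoid {d : V → ℤ // (∑ v, d v) = D} :=
  ⟨fun a b => (a : V → ℤ) - (b : V → ℤ) ∈ Lambda k, by
    constructor
    · intro a; simpa using (Lambda k).zero_mem
    · intro a b h; have h2 := (Lambda k).neg_mem h; rwa [neg_sub] at h2
    · intro a b c h1 h2
      have h3 := (Lambda k).add_mem h1 h2
      rwa [sub_add_sub_cancel] at h3⟩

/-- Number of edges of the sub-multigraph induced on `A`. -/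
def numEdgesIn (k : V → V → ℕ) (A : Finset V) : ℕ :=
  (∑ v ∈ A, k v v) + (∑ u ∈ A, ∑ v ∈ A.erase u, k u v) / 2

/-- Blow-up of a multigraph at the single bridge `a`–`b`: one exceptional
vertex is inserted in the middle of the bridge. -/
def blowK (k : V → V → ℕ) (a b : V) : (V ⊕ Unit) → (V ⊕ Unit) → ℕ
  | Sum.inl u, Sum.inl v => if (u = a ∧ v = b) ∨ (u = b ∧ v = a) then 0 else k u v
  | Sum.inl u, Sum.inr _ => if u = a ∨ u = b then 1 else 0
  | Sum.inr _, Sum.inl v => if v = a ∨ v = b then 1 else 0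
  | Sum.inr _, Sum.inr _ => 0

/-- Weight function of the blow-up at one bridge: exceptional vertex has weight 0. -/
def blowW (w : V → ℕ) : V ⊕ Unit → ℕ
  | Sum.inl v => w v
  | Sum.inr _ => 0

/-- Blow-up of a multigraph at a set `S` of bridges (given as ordered pairs):
one exceptional vertex is inserted in the middle of each bridge of `S`. -/
def blowKS (k : V → V → ℕ) (S : Finset (V × V)) :
    (V ⊕ {p : V × V // p ∈ S}) → (V ⊕ {p : V × V // p ∈ S}) → ℕ
  | Sum.inl u, Sum.inl v => if (u, v) ∈ S ∨ (v, u) ∈ S then 0 else k u v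
  | Sum.inl u, Sum.inr e => if u = e.1.1 ∨ u = e.1.2 then 1 else 0
  | Sum.inr e, Sum.inl v => if v = e.1.1 ∨ v = e.1.2 then 1 else 0
  | Sum.inr _, Sum.inr _ => 0

/-- Weight function of the blow-up at a set of bridges. -/
def blowWS (w : V → ℕ) (S : Finset (V × V)) : (V ⊕ {p : V × V // p ∈ S}) → ℕ
  | Sum.inl v => w v
  | Sum.inr _ => 0

/-- Strictly balanced multidegree of total degree `D` on the blow-up `Γ̂_S`:
balanced (with degree 1 on each exceptional vertex), and the inequality is
strict for every proper nonempty `A` such that some edge between `A` and its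
complement has no exceptional endpoint. -/
def IsStrictlyBalancedBlowS (k : V → V → ℕ) (w : V → ℕ) (S : Finset (V × V)) (D : ℤ)
    (dh : (V ⊕ {p : V × V // p ∈ S}) → ℤ) : Prop :=
  IsBalanced (blowKS k S) (blowWS w S) D dh ∧
    (∀ e : {p : V × V // p ∈ S}, dh (Sum.inr e) = 1) ∧
    ∀ A : Finset (V ⊕ {p : V × V // p ∈ S}), A ≠ ∅ → A ≠ Finset.univ →
      (∃ u v : V, Sum.inl u ∈ A ∧ Sum.inl v ∉ A ∧ 0 < blowKS k S (Sum.inl u) (Sum.inl v)) →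
      mA (blowKS k S) (blowWS w S) D A < (degA dh A : ℚ)

/-- Multiplicity function of the vine graph: two vertices joined by `δ` edges,
no loops. -/
def vineK (δ : ℕ) : Fin 2 → Fin 2 → ℕ := fun u v => if u = v then 0 else δ

/-- Weight function of the vine graph with weights `g₁, g₂`. -/
def vineW (g1 g2 : ℕ) : Fin 2 → ℕ := fun v => if v = 0 then g1 else g2

/-- The data of a stable vine graph of genus `g` with weights `g₁, g₂` and `δ` edges. -/
def StableVine (g : ℤ) (g1 g2 δ : ℕ) : Prop :=
  2 ≤ δ ∧ ((g1 = 0 ∨ g2 = 0) → 3 ≤ δ) ∧ (g1 : ℤ) + (g2 : ℤ) + (δ : ℤ) - 1 = g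


lemma compl_eq_union' {A B : Finset V} (hBA : B ⊆ A) : Bᶜ = Aᶜ ∪ (A \ B) := by
  ext v
  simp only [Finset.mem_compl, Finset.mem_union, Finset.mem_sdiff]
  constructor
  · intro h
    by_cases hv : v ∈ A
    · exact Or.inr ⟨hv, h⟩
    · exact Or.inl hv
  · rintro (h | ⟨_, h⟩) hvB
    · exact h (hBA hvB)
    · exact h hvB

lemma deltaA_split (k : V → V → ℕ) (hsym : ∀ u v, k u v = k v u)
    {A B : Finset V} (hBA : B ⊆ A)
    (hcross : ∀ u ∈ B, ∀ v ∈ A \ B, k u v = 0) :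
    deltaA k A = deltaA k B + deltaA k (A \ B) := by
  have hd1 : Disjoint (Aᶜ) (A \ B) :=
    Finset.disjoint_left.mpr (fun v hv hv2 => (Finset.mem_compl.mp hv) (Finset.mem_sdiff.mp hv2).1)
  have hd2 : Disjoint (Aᶜ) B :=
    Finset.disjoint_left.mpr (fun v hv hv2 => (Finset.mem_compl.mp hv) (hBA hv2))
  have hc2 : (A \ B)ᶜ = Aᶜ ∪ B := by
    have := compl_eq_union' (Finset.sdiff_subset (s := A) (t := B))
    rw [this]
    congr 1
    exact Finset.sdiff_sdiff_eq_self hBA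
  have hB : deltaA k B = ∑ u ∈ B, ∑ v ∈ Aᶜ, (k u v : ℤ) := by
    unfold deltaA
    rw [compl_eq_union' hBA]
    rw [Finset.sum_congr rfl (fun u hu => Finset.sum_union hd1)]
    rw [Finset.sum_add_distrib]
    have : ∑ u ∈ B, ∑ v ∈ A \ B, (k u v : ℤ) = 0 := by
      apply Finset.sum_eq_zero; intro u hu
      apply Finset.sum_eq_zero; intro v hv
      exact_mod_cast congrArg Nat.cast (hcross u hu v hv)
    omega
  have hAB : deltaA k (A \ B) = ∑ u ∈ A \ B, ∑ v ∈ Aᶜ, (k u v : ℤ) := by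
    unfold deltaA
    rw [hc2]
    rw [Finset.sum_congr rfl (fun u hu => Finset.sum_union hd2)]
    rw [Finset.sum_add_distrib]
    have : ∑ u ∈ A \ B, ∑ v ∈ B, (k u v : ℤ) = 0 := by
      apply Finset.sum_eq_zero; intro u hu
      apply Finset.sum_eq_zero; intro v hv
      have := hcross v hv u hu
      rw [hsym u v, this]; simp
    omega
  rw [hB, hAB]
  unfold deltaA
  rw [← Finset.sum_sdiff hBA]
  ring

lemma mA_split (k : V → V → ℕ) (w : V → ℕ) (D : ℤ) (hsym : ∀ u v, k u v = k v u)
    {A B : Finset V} (hBA : B ⊆ A)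
    (hcross : ∀ u ∈ B, ∀ v ∈ A \ B, k u v = 0) :
    mA k w D A = mA k w D B + mA k w D (A \ B) := by
  have hw : wA k w A = wA k w B + wA k w (A \ B) := by
    unfold wA
    rw [← Finset.sum_sdiff hBA]
    ring
  have hδ := deltaA_split k hsym hBA hcross
  unfold mA
  rw [hw, hδ]
  push_cast
  ring

lemma degA_split (d : V → ℤ) {A B : Finset V} (hBA : B ⊆ A) :
    degA d A = degA d B + degA d (A \ B) := by
  unfold degA
  rw [← Finset.sum_sdiff hBA]
  ring

/-- If the balancing inequality holds for every connected subset,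
then it holds for every subset, i.e. the multidegree is balanced. -/
theorem stmt5 (V : Type) [Fintype V] [DecidableEq V] (k : V → V → ℕ) (w : V → ℕ)
    (hsym : ∀ u v, k u v = k v u) (hconn : (graphOf k).Connected)
    (hg : 2 ≤ genus k w) (D : ℤ) (d : V → ℤ) (hdeg : degA d Finset.univ = D)
    (hcon : ∀ A : Finset V, IsConnectedSubset k A → mA k w D A ≤ (degA d A : ℚ)) :
    IsBalanced k w D d := by
  refine ⟨hdeg, ?_⟩
  intro A
  induction A using Finset.strongInduction with
  | _ A ih =>
    by_cases hconnA : IsConnectedSubset k A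
    · exact hcon A hconnA
    by_cases hAe : A = ∅
    · subst hAe
      simp [mA, wA, deltaA, degA]
    have hne : A.Nonempty := Finset.nonempty_iff_ne_empty.mpr hAe
    have hnep : Nonempty ((A : Set V) : Type) := by
      obtain ⟨v, hv⟩ := hne
      exact ⟨⟨v, by simpa using hv⟩⟩
    set G := (graphOf k).induce (A : Set V) with hG
    have hpre : ¬ G.Preconnected := by
      intro h
      exact hconnA (by haveI := hnep; exact SimpleGraph.Connected.mk h)
    unfold SimpleGraph.Preconnected at hpre
    push_neg at hpre
    obtain ⟨x, y, hxy⟩ := hpre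
    set B : Finset V :=
      Finset.image (fun z : ((A : Set V) : Type) => (z : V))
        (Finset.univ.filter (fun z => G.Reachable x z)) with hBdef
    have hBmem : ∀ (v : V) (hv : v ∈ (A : Set V)), (v ∈ B ↔ G.Reachable x ⟨v, hv⟩) := by
      intro v hv
      simp only [hBdef, Finset.mem_image, Finset.mem_filter, Finset.mem_univ, true_and]
      constructor
      · rintro ⟨z, hz, rfl⟩
        have : z = ⟨(z : V), hv⟩ := Subtype.ext rfl
        rwa [this] at hz
      · intro h
        exact ⟨⟨v, hv⟩, h, rfl⟩
    have hBA : B ⊆ A := by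
      intro v hv
      simp only [hBdef, Finset.mem_image, Finset.mem_filter] at hv
      obtain ⟨z, _, rfl⟩ := hv
      simpa using z.2
    have hxB : (x : V) ∈ B := by
      simp only [hBdef, Finset.mem_image, Finset.mem_filter, Finset.mem_univ, true_and]
      exact ⟨x, SimpleGraph.Reachable.refl x, rfl⟩
    have hyB : (y : V) ∉ B := by
      intro h
      have := (hBmem (y : V) y.2).mp h
      rw [Subtype.coe_eta] at this
      exact hxy this
    have hcross : ∀ u ∈ B, ∀ v ∈ A \ B, k u v = 0 := by
      intro u hu v hv
      by_contra hk
      obtain ⟨hvA, hvB⟩ := Finset.mem_sdiff.mp hv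
      have huA : u ∈ A := hBA hu
      have hne' : u ≠ v := by rintro rfl; exact hvB hu
      have huA' : u ∈ (A : Set V) := by simpa using huA
      have hvA' : v ∈ (A : Set V) := by simpa using hvA
      have hadj : G.Adj ⟨u, huA'⟩ ⟨v, hvA'⟩ := by
        show u ≠ v ∧ (0 < k u v ∨ 0 < k v u)
        refine ⟨?_, Or.inl (Nat.pos_of_ne_zero hk)⟩
        simpa using hne'
      have hru : G.Reachable x ⟨u, huA'⟩ := (hBmem u huA').mp hu
      have hrv : G.Reachable x ⟨v, hvA'⟩ := hru.trans hadj.reachable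
      exact hvB ((hBmem v hvA').mpr hrv)
    have hBss : B ⊂ A := by
      refine ⟨hBA, fun h => hyB (h (by simpa using y.2))⟩
    have hABss : A \ B ⊂ A := by
      refine ⟨Finset.sdiff_subset, fun h => ?_⟩
      have := h (hBA hxB)
      exact (Finset.mem_sdiff.mp this).2 hxB
    have h1 := ih B hBss
    have h2 := ih (A \ B) hABss
    rw [mA_split k w D hsym hBA hcross, degA_split d hBA]
    push_cast
    linarith

end
end

section
/- Let Γ be a connected multigraph with exactly s bridges. Then the quotient V² = V/≈ has exactly #V − s elements; consequently b₁(Γ²) = b₁(Γ), and for every weight function w on V the genus of the contracted weighted graph (Γ²,w²) equals the genus of (Γ,w). -/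
open Finset

noncomputable section
open scoped Classical

variable {V : Type} [Fintype V] [DecidableEq V]

section Aux6

open SimpleGraph

variable {V : Type} [Fintype V] [DecidableEq V]

lemma removeEdge_comm (k : V → V → ℕ) (a b : V) : removeEdge k a b = removeEdge k b a := by
  funext u v
  unfold removeEdge
  exact if_congr or_comm rfl rfl

lemma isBridge_symm6 {k : V → V → ℕ} (hsym : ∀ u v, k u v = k v u) {a b : V}
    (h : IsBridge k a b) : IsBridge k b a := by
  obtain ⟨hne, h1, h2⟩ := h
  exact ⟨hne.symm, (hsym b a).trans h1, by rwa [removeEdge_comm]⟩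

lemma graphOf_removeEdge (k : V → V → ℕ) (hsym : ∀ u v, k u v = k v u) {a b : V} (hab : a ≠ b) :
    graphOf (removeEdge k a b) = graphOf k \ SimpleGraph.fromEdgeSet {s(a, b)} := by
  ext u v
  simp only [graphOf, removeEdge, SimpleGraph.sdiff_adj, SimpleGraph.fromEdgeSet_adj,
    Set.mem_singleton_iff, Sym2.eq_iff]
  by_cases hC : (u = a ∧ v = b) ∨ (u = b ∧ v = a)
  · have huv : u ≠ v := by
      rcases hC with ⟨rfl, rfl⟩ | ⟨rfl, rfl⟩
      · exact hab
      · exact hab.symm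
    have hC' : (v = a ∧ u = b) ∨ (v = b ∧ u = a) := by tauto
    simp [hC, hC', huv]
  · have hC' : ¬ ((v = a ∧ u = b) ∨ (v = b ∧ u = a)) := by tauto
    simp only [hC, hC', if_neg, not_false_iff]
    tauto

lemma bridge_isBridge {k : V → V → ℕ} (hsym : ∀ u v, k u v = k v u)
    (hconn : (graphOf k).Connected) {a b : V} (h : IsBridge k a b) :
    (graphOf k).IsBridge s(a, b) := by
  obtain ⟨hne, h1, h2⟩ := h
  rw [SimpleGraph.isBridge_iff]
  refine fun hreach => h2 ?_
  rw [graphOf_removeEdge k hsym hne]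
  set G' := graphOf k \ SimpleGraph.fromEdgeSet {s(a, b)} with hG'
  have key : ∀ {x y : V}, (graphOf k).Walk x y → G'.Reachable x y := by
    intro x y w
    induction w with
    | nil => exact SimpleGraph.Reachable.refl _
    | @cons x z y hadj p ih =>
      refine SimpleGraph.Reachable.trans ?_ ih
      by_cases he : s(x, z) = s(a, b)
      · rw [Sym2.eq_iff] at he
        rcases he with ⟨rfl, rfl⟩ | ⟨rfl, rfl⟩
        · exact hreach
        · exact hreach.symm
      · refine SimpleGraph.Adj.reachable ?_
        rw [hG', SimpleGraph.sdiff_adj, SimpleGraph.fromEdgeSet_adj]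
        exact ⟨hadj, by simp [he]⟩
  have hne : Nonempty V := hconn.nonempty
  exact ⟨fun x y => (hconn.preconnected x y).elim fun w => key w⟩

/-- The bridge graph. -/
def bG (k : V → V → ℕ) : SimpleGraph V where
  Adj u v := IsBridge k u v ∨ IsBridge k v u
  symm := ⟨fun u v h => h.symm⟩
  loopless := ⟨fun v h => by rcases h with h | h <;> exact h.1 rfl⟩

lemma bG_le {k : V → V → ℕ} : bG k ≤ graphOf k := by
  intro u w h
  rcases h with h | h
  · exact ⟨h.1, Or.inl (by have := h.2.1; omega)⟩
  · exact ⟨fun e => h.1 e.symm, Or.inr (by have := h.2.1; omega)⟩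

lemma bG_acyclic {k : V → V → ℕ} (hsym : ∀ u v, k u v = k v u)
    (hconn : (graphOf k).Connected) : (bG k).IsAcyclic := by
  intro v c hc
  cases c with
  | nil => exact hc.ne_nil rfl
  | @cons _ x _ hadj p =>
    have hbr' : (graphOf k).IsBridge s(v, x) := by
      rcases hadj with h | h
      · exact bridge_isBridge hsym hconn h
      · have := bridge_isBridge hsym hconn h
        rwa [Sym2.eq_swap] at this
    have hc' := hc.mapLe (bG_le (k := k))
    have hmem : s(v, x) ∈ ((SimpleGraph.Walk.cons hadj p).mapLe (bG_le (k := k))).edges := by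
      simp [SimpleGraph.Walk.mapLe]
    exact hbr'.notMem_edges_of_isCycle hc' hmem

lemma mem_fiber6 {k : V → V → ℕ} {u : V} {c : V2 k} :
    u ∈ fiber k c ↔ Quotient.mk (contractSetoid k) u = c := by
  simp [fiber]

lemma mem_coe_fiber6 {k : V → V → ℕ} {u : V} {c : V2 k} :
    u ∈ (↑(fiber k c) : Set V) ↔ Quotient.mk (contractSetoid k) u = c := by
  simp [fiber]

lemma fiber_filter_eq {k : V → V → ℕ} (c : V2 k)
    (inst : DecidablePred (fun v : V => Quotient.mk (contractSetoid k) v = c)) :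
    (@Finset.filter V (fun v => Quotient.mk (contractSetoid k) v = c) inst Finset.univ)
      = fiber k c := by
  ext v
  simp [fiber]

lemma filter_erase_eq6 {k : V → V → ℕ} (u : V) (c : V2 k)
    (inst : DecidablePred (fun v : V => Quotient.mk (contractSetoid k) v = c)) :
    (@Finset.filter V (fun v => Quotient.mk (contractSetoid k) v = c) inst
        (Finset.univ.erase u)) = (fiber k c).erase u := by
  ext v
  constructor
  · intro hv
    rcases Finset.mem_filter.mp hv with ⟨hv1, hv2⟩
    exact Finset.mem_erase.mpr ⟨(Finset.mem_erase.mp hv1).1, mem_fiber6.mpr hv2⟩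
  · intro hv
    rcases Finset.mem_erase.mp hv with ⟨hne, hf⟩
    exact Finset.mem_filter.mpr ⟨Finset.mem_erase.mpr ⟨hne, Finset.mem_univ _⟩,
      mem_fiber6.mp hf⟩

lemma bridge_quotient_eq {k : V → V → ℕ} {u v : V} (h : IsBridge k u v) :
    Quotient.mk (contractSetoid k) u = Quotient.mk (contractSetoid k) v :=
  Quotient.sound (Relation.EqvGen.rel _ _ h)

lemma fiber_induce_connected {k : V → V → ℕ} (c : V2 k) :
    ((bG k).induce (↑(fiber k c) : Set V)).Connected := by
  have key : ∀ u v : V, Relation.EqvGen (fun a b => IsBridge k a b) u v →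
      ∀ (hu : u ∈ (↑(fiber k c) : Set V)) (hv : v ∈ (↑(fiber k c) : Set V)),
        ((bG k).induce (↑(fiber k c) : Set V)).Reachable ⟨u, hu⟩ ⟨v, hv⟩ := by
    intro u v h
    induction h with
    | rel a b hab =>
      intro hu hv
      exact SimpleGraph.Adj.reachable (Or.inl hab)
    | refl a => intro hu hv; exact SimpleGraph.Reachable.refl _
    | symm a b hab ih => intro hu hv; exact (ih hv hu).symm
    | trans a b c' hab hbc iha ihb =>
      intro hu hv
      have hbmem : b ∈ (↑(fiber k c) : Set V) := by
        rw [mem_coe_fiber6] at hu ⊢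
        rw [← hu]
        exact (Quotient.sound (s := contractSetoid k) hab).symm
      exact (iha hu hbmem).trans (ihb hbmem hv)
  have hne : Nonempty ((↑(fiber k c) : Set V)) := by
    obtain ⟨v, hv⟩ := Quotient.exists_rep c
    exact ⟨⟨v, mem_coe_fiber6.mpr hv⟩⟩
  refine ⟨?_⟩
  rintro ⟨x, hx⟩ ⟨y, hy⟩
  refine key x y ?_ hx hy
  have hx' := mem_coe_fiber6.mp hx
  have hy' := mem_coe_fiber6.mp hy
  exact Quotient.exact (s := contractSetoid k) (hx'.trans hy'.symm)

lemma fiber_induce_tree {k : V → V → ℕ} (hsym : ∀ u v, k u v = k v u)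
    (hconn : (graphOf k).Connected) (c : V2 k) :
    ((bG k).induce (↑(fiber k c) : Set V)).IsTree := by
  refine ⟨fiber_induce_connected c, ?_⟩
  intro v p hp
  have hinj : Function.Injective
      (SimpleGraph.Embedding.induce (↑(fiber k c) : Set V) : _ ↪g bG k) :=
    (SimpleGraph.Embedding.induce _).injective
  exact bG_acyclic hsym hconn
    (p.map (SimpleGraph.Embedding.induce _).toHom) (hp.map hinj)

lemma Jc_card {k : V → V → ℕ} (hsym : ∀ u v, k u v = k v u)
    (hconn : (graphOf k).Connected) (c : V2 k) :
    (((fiber k c) ×ˢ (fiber k c)).filter (fun p => IsBridge k p.1 p.2)).card + 2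
      = 2 * (fiber k c).card := by
  classical
  have h1 := (fiber_induce_tree hsym hconn c).card_edgeFinset
  have hdart := SimpleGraph.dart_card_eq_twice_card_edges
    ((bG k).induce (↑(fiber k c) : Set V))
  have hcardS : Fintype.card (↑(fiber k c) : Set V) = (fiber k c).card := by simp
  have hequiv : Fintype.card ((bG k).induce (↑(fiber k c) : Set V)).Dart
      = (((fiber k c) ×ˢ (fiber k c)).filter (fun p => IsBridge k p.1 p.2)).card := by
    rw [← Fintype.card_coe]
    refine Fintype.card_congr ⟨?_, ?_, ?_, ?_⟩
    · intro d
      refine ⟨(d.toProd.1.1, d.toProd.2.1), ?_⟩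
      rw [Finset.mem_filter, Finset.mem_product]
      have hadj : (bG k).Adj d.toProd.1.1 d.toProd.2.1 := d.adj
      refine ⟨⟨Finset.mem_coe.mp d.toProd.1.2, Finset.mem_coe.mp d.toProd.2.2⟩, ?_⟩
      rcases hadj with h | h
      · exact h
      · exact isBridge_symm6 hsym h
    · intro p
      have hm := Finset.mem_filter.mp p.2
      have h1' : (p.1.1 : V) ∈ (↑(fiber k c) : Set V) :=
        Finset.mem_coe.mpr (Finset.mem_product.mp hm.1).1
      have h2' : (p.1.2 : V) ∈ (↑(fiber k c) : Set V) :=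
        Finset.mem_coe.mpr (Finset.mem_product.mp hm.1).2
      exact ⟨(⟨p.1.1, h1'⟩, ⟨p.1.2, h2'⟩), Or.inl hm.2⟩
    · intro d
      apply SimpleGraph.Dart.ext
      rfl
    · intro p
      apply Subtype.ext
      rfl
  rw [hequiv] at hdart
  omega

lemma sum_Jc {k : V → V → ℕ} :
    ∑ c : V2 k, (((fiber k c) ×ˢ (fiber k c)).filter (fun p => IsBridge k p.1 p.2)).card
      = Fintype.card {p : V × V // IsBridge k p.1 p.2} := by
  classical
  rw [Fintype.card_subtype]
  rw [Finset.card_eq_sum_card_fiberwise (M := V2 k)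
    (f := fun p : V × V => Quotient.mk (contractSetoid k) p.1) (t := Finset.univ)
    (fun _ _ => Finset.mem_univ _)]
  refine Finset.sum_congr rfl ?_
  intro c _
  congr 1
  ext p
  simp only [Finset.mem_filter, Finset.mem_product, Finset.mem_univ, true_and, mem_fiber6]
  constructor
  · rintro ⟨⟨h1, -⟩, hb⟩
    exact ⟨hb, h1⟩
  · rintro ⟨hb, hc⟩
    exact ⟨⟨hc, (bridge_quotient_eq hb).symm.trans hc⟩, hb⟩

lemma sum_fiber_card {k : V → V → ℕ} :
    ∑ c : V2 k, (fiber k c).card = Fintype.card V := by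
  classical
  rw [← Finset.card_univ (α := V)]
  rw [Finset.card_eq_sum_card_fiberwise (M := V2 k)
    (f := fun v : V => Quotient.mk (contractSetoid k) v) (t := Finset.univ)
    (fun _ _ => Finset.mem_univ _)]
  exact Finset.sum_congr rfl fun c _ => congrArg Finset.card (fiber_filter_eq c _).symm

lemma card_V2_add {k : V → V → ℕ} (hsym : ∀ u v, k u v = k v u)
    (hconn : (graphOf k).Connected) {s : ℕ}
    (hs : Nat.card {p : V × V // IsBridge k p.1 p.2} = 2 * s) :
    Fintype.card (V2 k) + s = Fintype.card V := by
  have h1 : ∑ c : V2 k,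
      ((((fiber k c) ×ˢ (fiber k c)).filter (fun p => IsBridge k p.1 p.2)).card + 2)
      = ∑ c : V2 k, 2 * (fiber k c).card :=
    Finset.sum_congr rfl fun c _ => Jc_card hsym hconn c
  rw [Finset.sum_add_distrib, Finset.sum_const, ← Finset.mul_sum] at h1
  rw [sum_Jc, sum_fiber_card, ← Nat.card_eq_fintype_card, hs] at h1
  simp only [smul_eq_mul, Finset.card_univ] at h1
  omega

lemma decomp6 (k : V → V → ℕ) (f : V → V → ℕ) :
    ∑ u, ∑ v ∈ Finset.univ.erase u, f u v
      = (∑ c : V2 k, ∑ u ∈ fiber k c, ∑ v ∈ (fiber k c).erase u, f u v)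
        + ∑ c : V2 k, ∑ c' ∈ Finset.univ.erase c, ∑ u ∈ fiber k c, ∑ v ∈ fiber k c', f u v := by
  classical
  have h1 : ∀ u : V, ∑ v ∈ Finset.univ.erase u, f u v
      = ∑ c' : V2 k, ∑ v ∈ (fiber k c').erase u, f u v := by
    intro u
    rw [← Finset.sum_fiberwise (κ := V2 k) (Finset.univ.erase u)
      (fun v => Quotient.mk (contractSetoid k) v) (f u)]
    exact Finset.sum_congr rfl fun c' _ => Finset.sum_congr (filter_erase_eq6 u c' _) fun _ _ => rfl
  have h2 : ∀ g : V → ℕ, ∑ u, g u = ∑ c : V2 k, ∑ u ∈ fiber k c, g u := by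
    intro g
    rw [← Finset.sum_fiberwise (κ := V2 k) (Finset.univ)
      (fun v => Quotient.mk (contractSetoid k) v) g]
    exact Finset.sum_congr rfl fun c _ => Finset.sum_congr (fiber_filter_eq c _) fun _ _ => rfl
  have hsplit : ∀ c : V2 k,
      (∑ c' : V2 k, ∑ u ∈ fiber k c, ∑ v ∈ (fiber k c').erase u, f u v)
        = (∑ u ∈ fiber k c, ∑ v ∈ (fiber k c).erase u, f u v)
          + ∑ c' ∈ Finset.univ.erase c, ∑ u ∈ fiber k c, ∑ v ∈ (fiber k c').erase u, f u v := by
    intro c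
    rw [← Finset.sum_erase_add Finset.univ _ (Finset.mem_univ c), add_comm]
  calc ∑ u, ∑ v ∈ Finset.univ.erase u, f u v
      = ∑ u, ∑ c' : V2 k, ∑ v ∈ (fiber k c').erase u, f u v :=
        Finset.sum_congr rfl fun u _ => h1 u
    _ = ∑ c : V2 k, ∑ u ∈ fiber k c, ∑ c' : V2 k, ∑ v ∈ (fiber k c').erase u, f u v := h2 _
    _ = ∑ c : V2 k, ∑ c' : V2 k, ∑ u ∈ fiber k c, ∑ v ∈ (fiber k c').erase u, f u v :=
        Finset.sum_congr rfl fun c _ => by rw [Finset.sum_comm]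
    _ = ∑ c : V2 k, ((∑ u ∈ fiber k c, ∑ v ∈ (fiber k c).erase u, f u v)
          + ∑ c' ∈ Finset.univ.erase c, ∑ u ∈ fiber k c, ∑ v ∈ (fiber k c').erase u, f u v) :=
        Finset.sum_congr rfl fun c _ => hsplit c
    _ = (∑ c : V2 k, ∑ u ∈ fiber k c, ∑ v ∈ (fiber k c).erase u, f u v)
          + ∑ c : V2 k, ∑ c' ∈ Finset.univ.erase c, ∑ u ∈ fiber k c,
              ∑ v ∈ (fiber k c').erase u, f u v := Finset.sum_add_distrib
    _ = _ := by
        congr 1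
        refine Finset.sum_congr rfl fun c _ => Finset.sum_congr rfl fun c' hc' => ?_
        refine Finset.sum_congr rfl fun u hu => ?_
        rw [Finset.erase_eq_of_notMem]
        intro humem
        have hq1 := mem_fiber6.mp hu
        have hq2 := mem_fiber6.mp humem
        exact (Finset.mem_erase.mp hc').1 (hq2.symm.trans hq1)

lemma even_sum_pairs {α : Type*} [DecidableEq α] (A : Finset α) (f : α → α → ℕ)
    (hf : ∀ a b, f a b = f b a) :
    Even (∑ u ∈ A, ∑ v ∈ A.erase u, f u v) := by
  classical
  induction A using Finset.induction_on with
  | empty => simp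
  | @insert a A ha ih =>
    have hrw : ∑ u ∈ insert a A, ∑ v ∈ (insert a A).erase u, f u v
        = 2 * (∑ v ∈ A, f a v) + ∑ u ∈ A, ∑ v ∈ A.erase u, f u v := by
      rw [Finset.sum_insert ha, Finset.erase_insert ha]
      have : ∀ u ∈ A, ∑ v ∈ (insert a A).erase u, f u v
          = f u a + ∑ v ∈ A.erase u, f u v := by
        intro u hu
        have hne : u ≠ a := fun h => ha (h ▸ hu)
        rw [Finset.erase_insert_of_ne hne.symm, Finset.sum_insert
          (by simp only [Finset.mem_erase]; exact fun h => ha h.2)]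
      rw [Finset.sum_congr rfl this, Finset.sum_add_distrib]
      have : ∑ u ∈ A, f u a = ∑ v ∈ A, f a v :=
        Finset.sum_congr rfl fun u _ => hf u a
      rw [this]
      ring
    rw [hrw]
    exact (even_two_mul _).add ih

lemma k2_symm {k : V → V → ℕ} (hsym : ∀ u v, k u v = k v u) (c c' : V2 k) :
    k2 k c c' = k2 k c' c := by
  by_cases h : c = c'
  · subst h; rfl
  · rw [k2, k2, if_neg h, if_neg (Ne.symm h)]
    rw [Finset.sum_comm]
    exact Finset.sum_congr rfl fun u _ => Finset.sum_congr rfl fun v _ => hsym _ _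

lemma numEdges_k2 {k : V → V → ℕ} (hsym : ∀ u v, k u v = k v u)
    (hconn : (graphOf k).Connected) {s : ℕ}
    (hs : Nat.card {p : V × V // IsBridge k p.1 p.2} = 2 * s) :
    numEdges (k2 k) + s = numEdges k := by
  classical
  have hIeven : ∀ c : V2 k, Even (∑ u ∈ fiber k c, ∑ v ∈ (fiber k c).erase u,
      (if IsBridge k u v then 0 else k u v)) := by
    intro c
    refine even_sum_pairs _ _ ?_
    intro a b
    by_cases hb : IsBridge k a b
    · rw [if_pos hb, if_pos (isBridge_symm6 hsym hb)]
    · rw [if_neg hb, if_neg (fun h => hb (isBridge_symm6 hsym h)), hsym]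
  have hT2even : Even (∑ c : V2 k, ∑ c' ∈ Finset.univ.erase c, k2 k c c') :=
    even_sum_pairs _ _ (k2_symm hsym)
  have hTeven : Even (∑ u : V, ∑ v ∈ Finset.univ.erase u, k u v) :=
    even_sum_pairs _ _ hsym
  have hA : ∑ c : V2 k, k2 k c c = (∑ v : V, k v v)
      + ∑ c : V2 k, (∑ u ∈ fiber k c, ∑ v ∈ (fiber k c).erase u,
          (if IsBridge k u v then 0 else k u v)) / 2 := by
    have hthis : ∀ c : V2 k, k2 k c c = (∑ v ∈ fiber k c, k v v)
        + (∑ u ∈ fiber k c, ∑ v ∈ (fiber k c).erase u,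
            (if IsBridge k u v then 0 else k u v)) / 2 := fun c => by rw [k2, if_pos rfl]
    rw [Finset.sum_congr rfl fun c _ => hthis c, Finset.sum_add_distrib]
    congr 1
    rw [← Finset.sum_fiberwise (κ := V2 k) (Finset.univ)
      (fun v => Quotient.mk (contractSetoid k) v) (fun v => k v v)]
    exact Finset.sum_congr rfl fun c _ => Finset.sum_congr (fiber_filter_eq c _).symm fun _ _ => rfl
  have hhalf : 2 * ∑ c : V2 k, (∑ u ∈ fiber k c, ∑ v ∈ (fiber k c).erase u,
      (if IsBridge k u v then 0 else k u v)) / 2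
      = ∑ c : V2 k, ∑ u ∈ fiber k c, ∑ v ∈ (fiber k c).erase u,
          (if IsBridge k u v then 0 else k u v) := by
    rw [Finset.mul_sum]
    exact Finset.sum_congr rfl fun c _ => Nat.mul_div_cancel' (hIeven c).two_dvd
  have hT2half : 2 * ((∑ c : V2 k, ∑ c' ∈ Finset.univ.erase c, k2 k c c') / 2)
      = ∑ c : V2 k, ∑ c' ∈ Finset.univ.erase c, k2 k c c' :=
    Nat.mul_div_cancel' hT2even.two_dvd
  have hThalf : 2 * ((∑ u : V, ∑ v ∈ Finset.univ.erase u, k u v) / 2)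
      = ∑ u : V, ∑ v ∈ Finset.univ.erase u, k u v :=
    Nat.mul_div_cancel' hTeven.two_dvd
  have hNE2 : numEdges (k2 k) = (∑ c : V2 k, k2 k c c)
      + (∑ c : V2 k, ∑ c' ∈ Finset.univ.erase c, k2 k c c') / 2 := rfl
  have hNE : numEdges k = (∑ v : V, k v v)
      + (∑ u : V, ∑ v ∈ Finset.univ.erase u, k u v) / 2 := rfl
  have hdiag : ∀ c : V2 k, ∑ u ∈ fiber k c, ∑ v ∈ (fiber k c).erase u, k u v
      = (∑ u ∈ fiber k c, ∑ v ∈ (fiber k c).erase u,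
          (if IsBridge k u v then 0 else k u v))
        + (((fiber k c) ×ˢ (fiber k c)).filter (fun p => IsBridge k p.1 p.2)).card := by
    intro c
    have hsplit : ∀ u v : V, k u v
        = (if IsBridge k u v then 0 else k u v) + (if IsBridge k u v then 1 else 0) := by
      intro u v
      by_cases hb : IsBridge k u v
      · rw [if_pos hb, if_pos hb, hb.2.1]
      · simp [hb]
    have hstep : ∑ u ∈ fiber k c, ∑ v ∈ (fiber k c).erase u, k u v
        = (∑ u ∈ fiber k c, ∑ v ∈ (fiber k c).erase u,
            (if IsBridge k u v then 0 else k u v))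
          + ∑ u ∈ fiber k c, ∑ v ∈ (fiber k c).erase u,
              (if IsBridge k u v then 1 else 0) := by
      rw [← Finset.sum_add_distrib]
      refine Finset.sum_congr rfl fun u _ => ?_
      rw [← Finset.sum_add_distrib]
      exact Finset.sum_congr rfl fun v _ => hsplit u v
    rw [hstep]
    congr 1
    have herase : ∀ u ∈ fiber k c, ∑ v ∈ (fiber k c).erase u,
        (if IsBridge k u v then (1:ℕ) else 0)
        = ∑ v ∈ fiber k c, (if IsBridge k u v then (1:ℕ) else 0) := by
      intro u _
      refine Finset.sum_erase _ ?_
      simp only [ite_eq_right_iff]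
      intro hb
      exact absurd rfl hb.1
    rw [Finset.sum_congr rfl herase, Finset.card_filter, Finset.sum_product]
  have hcross : ∑ c : V2 k, ∑ c' ∈ Finset.univ.erase c,
      ∑ u ∈ fiber k c, ∑ v ∈ fiber k c', k u v
      = ∑ c : V2 k, ∑ c' ∈ Finset.univ.erase c, k2 k c c' := by
    refine Finset.sum_congr rfl fun c _ => Finset.sum_congr rfl fun c' hc' => ?_
    rw [k2, if_neg (Ne.symm (Finset.mem_erase.mp hc').1)]
  have hJs : ∑ c : V2 k,
      (((fiber k c) ×ˢ (fiber k c)).filter (fun p => IsBridge k p.1 p.2)).card = 2 * s := by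
    rw [sum_Jc, ← Nat.card_eq_fintype_card, hs]
  have hTdecomp : ∑ u : V, ∑ v ∈ Finset.univ.erase u, k u v
      = ((∑ c : V2 k, ∑ u ∈ fiber k c, ∑ v ∈ (fiber k c).erase u,
          (if IsBridge k u v then 0 else k u v)) + 2 * s)
        + ∑ c : V2 k, ∑ c' ∈ Finset.univ.erase c, k2 k c c' := by
    rw [decomp6 k k, hcross]
    congr 1
    rw [Finset.sum_congr rfl fun c _ => hdiag c, Finset.sum_add_distrib, hJs]
  omega

lemma sum_fiber_w {k : V → V → ℕ} (w : V → ℕ) :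
    ∑ c : V2 k, ∑ v ∈ fiber k c, (w v : ℤ) = ∑ v : V, (w v : ℤ) := by
  classical
  rw [← Finset.sum_fiberwise (κ := V2 k) (Finset.univ)
    (fun v => Quotient.mk (contractSetoid k) v) (fun v => (w v : ℤ))]
  exact Finset.sum_congr rfl fun c _ => Finset.sum_congr (fiber_filter_eq c _).symm fun _ _ => rfl

end Aux6

/-- If a connected multigraph has exactly `s` bridges (so `2s`
ordered bridge pairs), then `V²` has `#V − s` elements, `b₁(Γ²) = b₁(Γ)` and
the genus of `(Γ²,w²)` equals the genus of `(Γ,w)` for every weight function. -/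
theorem stmt6 (V : Type) [Fintype V] [DecidableEq V] (k : V → V → ℕ)
    (hsym : ∀ u v, k u v = k v u) (hconn : (graphOf k).Connected)
    (s : ℕ) (hs : Nat.card {p : V × V // IsBridge k p.1 p.2} = 2 * s) :
    Fintype.card (V2 k) = Fintype.card V - s ∧
    (numEdges (k2 k) : ℤ) - (Fintype.card (V2 k) : ℤ) + 1 =
      (numEdges k : ℤ) - (Fintype.card V : ℤ) + 1 ∧
    ∀ w : V → ℕ, genus (k2 k) (w2 k w) = genus k w := by
  have e2 := card_V2_add hsym hconn hs
  have e1 := numEdges_k2 hsym hconn hs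
  refine ⟨by omega, by push_cast; omega, ?_⟩
  intro w
  rw [genus, genus]
  have hw : ∑ c : V2 k, ((w2 k w c : ℕ) : ℤ) = ∑ v : V, (w v : ℤ) := by
    rw [← sum_fiber_w (k := k) w]
    refine Finset.sum_congr rfl fun c _ => ?_
    rw [w2]
    push_cast
    rfl
  rw [hw]
  congr 1
  push_cast
  omega
end
end

section
/- Let (Γ,w) be a connected weighted graph of genus g ≥ 2 and let A ⊆ V be a union of ≈-classes (equivalently, no bridge of Γ joins A to its complement); let A² = φ(A) ⊆ V². Then δ_A computed in Γ equals δ_{A²} computed in Γ², w_A computed in (Γ,w) equals w_{A²} computed in (Γ²,w²), and hence m_A(d) = m_{A²}(d) for every integer d. Moreover A induces a connected sub-multigraph of Γ if and only if A² induces a connected sub-multigraph of Γ². -/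
open Finset

noncomputable section
open scoped Classical

variable {V : Type} [Fintype V] [DecidableEq V]

namespace Stmt7Aux

variable {V : Type} [Fintype V] [DecidableEq V]

open SimpleGraph

lemma isBridge_symm {k : V → V → ℕ} (hsym : ∀ u v, k u v = k v u) {u v : V}
    (h : IsBridge k u v) : IsBridge k v u := by
  obtain ⟨hne, h1, h2⟩ := h
  refine ⟨hne.symm, by rw [hsym]; exact h1, ?_⟩
  have hre : removeEdge k v u = removeEdge k u v := by
    funext a b
    unfold removeEdge
    by_cases hc : (a = u ∧ b = v) ∨ (a = v ∧ b = u)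
    · rw [if_pos hc.symm, if_pos hc]
    · rw [if_neg (fun hx => hc hx.symm), if_neg hc]
  rw [hre]
  exact h2

/-- The simple graph whose edges are the bridges. -/
def bridgeGraph (k : V → V → ℕ) : SimpleGraph V where
  Adj u v := IsBridge k u v ∨ IsBridge k v u
  symm := ⟨fun u v h => h.symm⟩
  loopless := ⟨fun v h => by cases h with
    | inl h => exact h.1 rfl
    | inr h => exact h.1 rfl⟩

lemma reachable_of_eqv {k : V → V → ℕ} {u v : V}
    (h : Relation.EqvGen (fun a b => IsBridge k a b) u v) :
    (bridgeGraph k).Reachable u v := by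
  induction h with
  | rel a b hab => exact SimpleGraph.Adj.reachable (Or.inl hab)
  | refl a => exact SimpleGraph.Reachable.refl a
  | symm a b _ ih => exact ih.symm
  | trans a b c _ _ ih1 ih2 => exact ih1.trans ih2

lemma eqv_of_adj {k : V → V → ℕ} {u v : V} (h : (bridgeGraph k).Adj u v) :
    Relation.EqvGen (fun a b => IsBridge k a b) u v := by
  cases h with
  | inl h => exact Relation.EqvGen.rel _ _ h
  | inr h => exact Relation.EqvGen.symm _ _ (Relation.EqvGen.rel _ _ h)

lemma eqv_of_reachable {k : V → V → ℕ} {u v : V}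
    (h : (bridgeGraph k).Reachable u v) :
    Relation.EqvGen (fun a b => IsBridge k a b) u v := by
  obtain ⟨p⟩ := h
  induction p with
  | nil => exact Relation.EqvGen.refl _
  | cons h p ih => exact Relation.EqvGen.trans _ _ _ (eqv_of_adj h) ih

lemma mk_eq_iff_reachable {k : V → V → ℕ} {u v : V} :
    Quotient.mk (contractSetoid k) u = Quotient.mk (contractSetoid k) v ↔
      (bridgeGraph k).Reachable u v := by
  rw [Quotient.eq]
  exact ⟨reachable_of_eqv, eqv_of_reachable⟩

end Stmt7Aux
namespace Stmt7Aux
variable {V : Type} [Fintype V] [DecidableEq V]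
open SimpleGraph

lemma connected_removeEdge {k : V → V → ℕ} {a b : V}
    (hconn : (graphOf k).Connected)
    (hre : (graphOf (removeEdge k a b)).Reachable a b) :
    (graphOf (removeEdge k a b)).Connected := by
  rw [SimpleGraph.connected_iff] at hconn ⊢
  refine ⟨fun x y => ?_, hconn.2⟩
  obtain ⟨p⟩ := hconn.1 x y
  induction p with
  | nil => exact SimpleGraph.Reachable.refl _
  | @cons x z y h p ih =>
    refine SimpleGraph.Reachable.trans ?_ ih
    obtain ⟨hne, hk⟩ := h
    by_cases hc : (x = a ∧ z = b) ∨ (x = b ∧ z = a)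
    · rcases hc with ⟨rfl, rfl⟩ | ⟨rfl, rfl⟩
      · exact hre
      · exact hre.symm
    · have hc' : ¬((z = a ∧ x = b) ∨ (z = b ∧ x = a)) := fun h =>
        hc (h.elim (fun hh => Or.inr ⟨hh.2, hh.1⟩) (fun hh => Or.inl ⟨hh.2, hh.1⟩))
      refine SimpleGraph.Adj.reachable ⟨hne, ?_⟩
      simp only [removeEdge, if_neg hc, if_neg hc']
      exact hk

lemma bridgeGraph_isAcyclic {k : V → V → ℕ} (hsym : ∀ u v, k u v = k v u)
    (hconn : (graphOf k).Connected) : (bridgeGraph k).IsAcyclic := by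
  intro v c hc
  cases c with
  | nil => exact hc.ne_nil rfl
  | @cons _ b _ h p =>
    have hb : IsBridge k v b := h.elim id (isBridge_symm hsym)
    have hedge : s(v, b) ∉ p.edges := by
      have hnd := hc.edges_nodup
      rw [SimpleGraph.Walk.edges_cons, List.nodup_cons] at hnd
      exact hnd.1
    have hsub : ∀ e ∈ p.edges, e ∈ (graphOf (removeEdge k v b)).edgeSet := by
      intro e he
      induction e with
      | _ x y =>
        have hadj : (bridgeGraph k).Adj x y := p.adj_of_mem_edges he
        have hne : s(x, y) ≠ s(v, b) := fun hxy => hedge (hxy ▸ he)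
        have hk1 : k x y = 1 := hadj.elim (fun h => h.2.1) (fun h => (hsym x y).trans h.2.1)
        have hcond : ¬((x = v ∧ y = b) ∨ (x = b ∧ y = v)) := by
          intro hcc
          exact hne (Sym2.eq_iff.mpr hcc)
        rw [SimpleGraph.mem_edgeSet]
        refine ⟨hadj.ne, Or.inl ?_⟩
        simp only [removeEdge, if_neg hcond, hk1]
        norm_num
    have hreach : (graphOf (removeEdge k v b)).Reachable v b :=
      ((p.transfer _ hsub).reverse).reachable
    exact hb.2.2 (connected_removeEdge hconn hreach)

end Stmt7Aux
namespace Stmt7Aux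
variable {V : Type} [Fintype V] [DecidableEq V]
open SimpleGraph Finset

lemma mem_fiber_iff {k : V → V → ℕ} {c : V2 k} {v : V} :
    v ∈ fiber k c ↔ Quotient.mk (contractSetoid k) v = c := by
  simp [fiber]

lemma fiber_nonempty (k : V → V → ℕ) (c : V2 k) : (fiber k c).Nonempty := by
  obtain ⟨v, rfl⟩ := Quotient.exists_rep c
  exact ⟨v, mem_fiber_iff.mpr rfl⟩

lemma sum_fiber {k : V → V → ℕ} {M : Type} [AddCommMonoid M] (s : Finset (V2 k)) (B : Finset V)
    (h : ∀ v : V, v ∈ B ↔ Quotient.mk (contractSetoid k) v ∈ s) (f : V → M) :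
    ∑ v ∈ B, f v = ∑ c ∈ s, ∑ v ∈ fiber k c, f v := by
  rw [← Finset.sum_biUnion]
  · apply Finset.sum_congr _ (fun _ _ => rfl)
    ext v
    simp only [Finset.mem_biUnion, mem_fiber_iff, h]
    constructor
    · intro hv; exact ⟨_, hv, rfl⟩
    · rintro ⟨c, hc, rfl⟩; exact hc
  · intro c1 _ c2 _ hne
    exact Finset.disjoint_left.mpr (fun v hv1 hv2 =>
      hne (by rw [← mem_fiber_iff.mp hv1, mem_fiber_iff.mp hv2]))

lemma even_offdiag_sum {f : V → V → ℕ} (hf : ∀ u v, f u v = f v u) (s : Finset V) :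
    Even (∑ u ∈ s, ∑ v ∈ s.erase u, f u v) := by
  induction s using Finset.induction_on with
  | empty => simp
  | @insert a s ha ih =>
    rw [Finset.sum_insert ha, Finset.erase_insert ha]
    have h2 : ∀ u ∈ s, ∑ v ∈ (insert a s).erase u, f u v
        = f u a + ∑ v ∈ s.erase u, f u v := by
      intro u hu
      have hau : a ≠ u := fun h => ha (h ▸ hu)
      rw [Finset.erase_insert_of_ne hau, Finset.sum_insert (fun h => ha (Finset.mem_of_mem_erase h))]
    rw [Finset.sum_congr rfl h2, Finset.sum_add_distrib]
    have h3 : ∑ u ∈ s, f u a = ∑ v ∈ s, f a v := Finset.sum_congr rfl (fun u _ => hf u a)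
    have := ih
    rw [h3]
    rw [show ∑ v ∈ s, f a v + (∑ v ∈ s, f a v + ∑ u ∈ s, ∑ v ∈ s.erase u, f u v)
      = 2 * (∑ v ∈ s, f a v) + ∑ u ∈ s, ∑ v ∈ s.erase u, f u v by ring]
    exact (even_two_mul _).add ih

lemma fiber_bridge_count {k : V → V → ℕ} (hsym : ∀ u v, k u v = k v u)
    (hconn : (graphOf k).Connected) (c : V2 k) :
    ∑ u ∈ fiber k c, ∑ v ∈ fiber k c, (if IsBridge k u v then 1 else 0)
      = 2 * ((fiber k c).card - 1) := by
  classical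
  set s := fiber k c with hs
  set T : SimpleGraph ↥(s : Set V) := (bridgeGraph k).induce (s : Set V) with hT
  have hclosed : ∀ ⦃x y : V⦄, x ∈ (s : Set V) → (bridgeGraph k).Adj x y → y ∈ (s : Set V) := by
    intro x y hx hadj
    have hx' : Quotient.mk (contractSetoid k) x = c := mem_fiber_iff.mp hx
    have : Quotient.mk (contractSetoid k) y = Quotient.mk (contractSetoid k) x :=
      mk_eq_iff_reachable.mpr (SimpleGraph.Adj.reachable hadj.symm)
    exact mem_fiber_iff.mpr (this.trans hx')
  have hlift : ∀ {x y : V} (p : (bridgeGraph k).Walk x y) (hx : x ∈ (s : Set V))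
      (hy : y ∈ (s : Set V)), T.Reachable ⟨x, hx⟩ ⟨y, hy⟩ := by
    intro x y p
    induction p with
    | nil => intro hx hy; exact SimpleGraph.Reachable.refl _
    | @cons x z y h p ih =>
      intro hx hy
      have hz := hclosed hx h
      exact (SimpleGraph.Adj.reachable (by exact h :
        T.Adj ⟨x, hx⟩ ⟨z, hz⟩)).trans (ih hz hy)
  have htree : T.IsTree := by
    constructor
    · rw [SimpleGraph.connected_iff]
      refine ⟨fun x y => ?_, ?_⟩
      · obtain ⟨p⟩ := mk_eq_iff_reachable.mp
          ((mem_fiber_iff.mp x.2).trans (mem_fiber_iff.mp y.2).symm)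
        have := hlift p x.2 y.2
        simpa using this
      · obtain ⟨v, hv⟩ := fiber_nonempty k c
        exact ⟨⟨v, hv⟩⟩
    · intro v p hp
      exact bridgeGraph_isAcyclic hsym hconn _
        ((SimpleGraph.Walk.map_isCycle_iff_of_injective
          (f := (SimpleGraph.Embedding.induce (s : Set V)).toHom)
          (Subtype.val_injective)).mpr hp)
  have hcard := htree.card_edgeFinset
  have hdeg := T.sum_degrees_eq_twice_card_edges
  have hcoe : Fintype.card ↥(s : Set V) = s.card := by
    rw [← Fintype.card_coe s]
    exact Fintype.card_congr (Equiv.subtypeEquivRight (fun x => Finset.mem_coe))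
  have hdeg2 : ∀ x : ↥(s : Set V), T.degree x
      = ∑ v ∈ s, (if IsBridge k (x : V) v then 1 else 0) := by
    intro x
    rw [SimpleGraph.degree, SimpleGraph.neighborFinset_eq_filter, Finset.card_filter]
    rw [Finset.sum_subtype (p := fun v => v ∈ (s : Set V)) s (fun v => Finset.mem_coe.symm)
      (f := fun v => if IsBridge k (x : V) v then 1 else 0)]
    apply Finset.sum_congr rfl
    intro y _
    refine if_congr ?_ rfl rfl
    show (IsBridge k (x : V) (y : V) ∨ IsBridge k (y : V) (x : V)) ↔ IsBridge k (x : V) (y : V)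
    constructor
    · rintro (h | h)
      · exact h
      · exact isBridge_symm hsym h
    · exact fun h => Or.inl h
  have hmain : ∑ u ∈ s, ∑ v ∈ s, (if IsBridge k u v then 1 else 0)
      = ∑ x : ↥(s : Set V), T.degree x := by
    rw [Finset.sum_subtype (p := fun v => v ∈ (s : Set V)) s (fun v => Finset.mem_coe.symm)
      (f := fun u => ∑ v ∈ s, (if IsBridge k u v then 1 else 0))]
    exact Finset.sum_congr rfl (fun x _ => (hdeg2 x).symm)
  rw [hmain, hdeg]
  rw [hcoe] at hcard
  omega
end Stmt7Aux
namespace Stmt7Aux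
variable {V : Type} [Fintype V] [DecidableEq V]
open SimpleGraph Finset

lemma isBridge_iff {k : V → V → ℕ} (hsym : ∀ u v, k u v = k v u) (u v : V) :
    IsBridge k u v ↔ IsBridge k v u :=
  ⟨isBridge_symm hsym, isBridge_symm hsym⟩

lemma k2_symm {k : V → V → ℕ} (hsym : ∀ u v, k u v = k v u) :
    ∀ c c', k2 k c c' = k2 k c' c := by
  intro c c'
  by_cases h : c = c'
  · rw [h]
  · rw [k2, k2, if_neg h, if_neg (Ne.symm h), Finset.sum_comm]
    exact Finset.sum_congr rfl (fun u _ => Finset.sum_congr rfl (fun v _ => hsym v u))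

/-- The image of `A` in `V²`, with the ambient instances. -/
abbrev imageA (k : V → V → ℕ) (A : Finset V) : Finset (V2 k) :=
  A.image (fun v => Quotient.mk (contractSetoid k) v)

lemma mem_imageA_of_mem {k : V → V → ℕ} {A : Finset V} {v : V} (hv : v ∈ A) :
    Quotient.mk (contractSetoid k) v ∈ imageA k A :=
  @Finset.mem_image_of_mem V (V2 k) (fun a b => Classical.propDecidable (a = b)) A (fun v => Quotient.mk (contractSetoid k) v) v hv

lemma exists_of_mem_imageA {k : V → V → ℕ} {A : Finset V} {c : V2 k} (hc : c ∈ imageA k A) :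
    ∃ u ∈ A, Quotient.mk (contractSetoid k) u = c :=
  (@Finset.mem_image V (V2 k) (fun a b => Classical.propDecidable (a = b)) _ _ _).mp hc

lemma mem_iff_of_sat {k : V → V → ℕ} {A : Finset V}
    (hsat : ∀ u ∈ A, ∀ v : V,
      Quotient.mk (contractSetoid k) v = Quotient.mk (contractSetoid k) u → v ∈ A) :
    ∀ v : V, v ∈ A ↔ Quotient.mk (contractSetoid k) v ∈ imageA k A := by
  intro v
  constructor
  · intro hv; exact mem_imageA_of_mem hv
  · intro hv
    obtain ⟨u, hu, huv⟩ := exists_of_mem_imageA hv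
    exact hsat u hu v huv.symm

lemma deltaA_eq {k : V → V → ℕ} {A : Finset V}
    (hmem : ∀ v : V, v ∈ A ↔ Quotient.mk (contractSetoid k) v ∈ imageA k A) :
    deltaA k A = deltaA (k2 k) (imageA k A) := by
  set A2 : Finset (V2 k) := imageA k A with hA2
  have hmemc : ∀ v : V, v ∈ Aᶜ ↔ Quotient.mk (contractSetoid k) v ∈ A2ᶜ := by
    intro v
    simp only [Finset.mem_compl]
    exact (not_congr (hmem v)).trans (Finset.mem_compl (s := A2)).symm
  rw [deltaA, deltaA]
  rw [sum_fiber A2 A hmem (fun u => ∑ v ∈ Aᶜ, (k u v : ℤ))]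
  apply Finset.sum_congr rfl
  intro c hc
  rw [Finset.sum_comm]
  rw [sum_fiber A2ᶜ Aᶜ hmemc (fun v => ∑ u ∈ fiber k c, (k u v : ℤ))]
  apply Finset.sum_congr rfl
  intro c' hc'
  have hne : c ≠ c' := by
    intro h
    rw [h] at hc
    exact (Finset.mem_compl.mp hc') hc
  rw [k2, if_neg hne]
  push_cast
  rw [Finset.sum_comm]

lemma class_term {k : V → V → ℕ} (w : V → ℕ) (hsym : ∀ u v, k u v = k v u)
    (hconn : (graphOf k).Connected) (c : V2 k) :
    2 * ((w2 k w c : ℤ)) - 2 + 2 * ((k2 k c c : ℤ)) +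
        ∑ c' ∈ Finset.univ.erase c, ((k2 k c' c : ℤ))
      = ∑ v ∈ fiber k c,
          (2 * (w v : ℤ) - 2 + 2 * (k v v : ℤ) + ∑ u ∈ Finset.univ.erase v, (k u v : ℤ)) := by
  classical
  -- abbreviations
  have f4 : (w2 k w c : ℤ) = ∑ v ∈ fiber k c, (w v : ℤ) := by
    rw [w2]; push_cast; rfl
  -- f5 : diagonal
  have hnb_symm : ∀ u v : V, (if IsBridge k u v then 0 else k u v)
      = (if IsBridge k v u then 0 else k v u) :=
    fun u v => if_congr (isBridge_iff hsym u v) rfl (hsym u v)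
  have heven := even_offdiag_sum hnb_symm (fiber k c)
  have f5 : 2 * ((k2 k c c : ℤ))
      = 2 * (∑ v ∈ fiber k c, (k v v : ℤ)) +
        ∑ u ∈ fiber k c, ∑ v ∈ (fiber k c).erase u,
          (if IsBridge k u v then 0 else (k u v : ℤ)) := by
    have hnat : 2 * k2 k c c
        = 2 * (∑ v ∈ fiber k c, k v v) +
          ∑ u ∈ fiber k c, ∑ v ∈ (fiber k c).erase u,
            (if IsBridge k u v then 0 else k u v) := by
      rw [k2, if_pos rfl, Nat.mul_add, Nat.two_mul_div_two_of_even heven]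
    have := congrArg (fun n : ℕ => (n : ℤ)) hnat
    push_cast at this
    convert this using 2 <;> push_cast <;> ring
  -- f6 : off-diagonal contracted sum
  have f6 : ∑ c' ∈ Finset.univ.erase c, ((k2 k c' c : ℤ))
      = ∑ v ∈ fiber k c, ∑ u ∈ (fiber k c)ᶜ, (k u v : ℤ) := by
    rw [← Finset.sum_comm]
    have hB : ∀ u : V, u ∈ (fiber k c)ᶜ ↔
        Quotient.mk (contractSetoid k) u ∈ Finset.univ.erase c := by
      intro u
      simp only [Finset.mem_compl, mem_fiber_iff, Finset.mem_erase, Finset.mem_univ, and_true]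
      exact ⟨fun h => (Finset.mem_erase (s := (Finset.univ : Finset (V2 k))) (b := c)).mpr ⟨h, Finset.mem_univ (α := V2 k) _⟩,
        fun h => ((Finset.mem_erase (s := (Finset.univ : Finset (V2 k))) (b := c)).mp h).1⟩
    rw [sum_fiber (Finset.univ.erase c) ((fiber k c)ᶜ) hB
      (fun u => ∑ v ∈ fiber k c, (k u v : ℤ))]
    apply Finset.sum_congr rfl
    intro c' hc'
    have hne : c' ≠ c := (Finset.mem_erase.mp hc').1
    rw [k2, if_neg hne]
    push_cast
    rfl
  -- f1 : splitting the full off-diagonal sum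
  have f1 : ∑ v ∈ fiber k c, ∑ u ∈ Finset.univ.erase v, (k u v : ℤ)
      = (∑ v ∈ fiber k c, ∑ u ∈ (fiber k c).erase v, (k u v : ℤ)) +
        ∑ v ∈ fiber k c, ∑ u ∈ (fiber k c)ᶜ, (k u v : ℤ) := by
    rw [← Finset.sum_add_distrib]
    apply Finset.sum_congr rfl
    intro v hv
    have e1 := Finset.sum_erase_add (fiber k c) (fun u => (k u v : ℤ)) hv
    have e2 := Finset.sum_erase_add Finset.univ (fun u => (k u v : ℤ)) (Finset.mem_univ v)
    have e3 := Finset.sum_compl_add_sum (fiber k c) (fun u => (k u v : ℤ))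
    linarith
  -- f2 : the bridge count
  have hcount := fiber_bridge_count hsym hconn c
  have hpos := Finset.card_pos.mpr (fiber_nonempty k c)
  have f2 : (∑ v ∈ fiber k c, ∑ u ∈ (fiber k c).erase v, (k u v : ℤ))
      - (∑ u ∈ fiber k c, ∑ v ∈ (fiber k c).erase u,
          (if IsBridge k u v then 0 else (k u v : ℤ)))
      = 2 * ((fiber k c).card : ℤ) - 2 := by
    rw [← Finset.sum_sub_distrib]
    have hterm : ∀ u ∈ fiber k c,
        (∑ v ∈ (fiber k c).erase u, (k v u : ℤ))
          - (∑ v ∈ (fiber k c).erase u, (if IsBridge k u v then 0 else (k u v : ℤ)))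
        = ∑ v ∈ (fiber k c).erase u, (if IsBridge k u v then 1 else 0 : ℤ) := by
      intro u _
      rw [← Finset.sum_sub_distrib]
      apply Finset.sum_congr rfl
      intro v _
      by_cases hb : IsBridge k u v
      · rw [if_pos hb, if_pos hb, hsym v u, hb.2.1]
        norm_num
      · rw [if_neg hb, if_neg hb, hsym v u]
        ring
    rw [Finset.sum_congr rfl hterm]
    have hext : ∀ u ∈ fiber k c,
        (∑ v ∈ (fiber k c).erase u, (if IsBridge k u v then 1 else 0 : ℤ))
        = ∑ v ∈ fiber k c, (if IsBridge k u v then 1 else 0 : ℤ) := by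
      intro u _
      apply Finset.sum_erase
      rw [if_neg (fun hb => hb.1 rfl)]
    rw [Finset.sum_congr rfl hext]
    have hcast : (∑ u ∈ fiber k c, ∑ v ∈ fiber k c,
        (if IsBridge k u v then 1 else 0 : ℤ))
        = ((∑ u ∈ fiber k c, ∑ v ∈ fiber k c,
            (if IsBridge k u v then 1 else 0 : ℕ) : ℕ) : ℤ) := by
      push_cast
      apply Finset.sum_congr rfl
      intro u _
      apply Finset.sum_congr rfl
      intro v _
      split <;> norm_num
    rw [hcast, hcount]
    have : 1 ≤ (fiber k c).card := hpos
    omega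
  -- f3 : expanding the right-hand side
  have f3 : ∑ v ∈ fiber k c,
      (2 * (w v : ℤ) - 2 + 2 * (k v v : ℤ) + ∑ u ∈ Finset.univ.erase v, (k u v : ℤ))
      = 2 * (∑ v ∈ fiber k c, (w v : ℤ)) - 2 * ((fiber k c).card : ℤ)
        + 2 * (∑ v ∈ fiber k c, (k v v : ℤ))
        + ∑ v ∈ fiber k c, ∑ u ∈ Finset.univ.erase v, (k u v : ℤ) := by
    rw [Finset.sum_add_distrib, Finset.sum_add_distrib, Finset.sum_sub_distrib,
      Finset.sum_const, ← Finset.mul_sum, ← Finset.mul_sum]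
    push_cast
    ring
  rw [f3, f4, f5, f6]
  linarith [f1, f2]

lemma wA_eq {k : V → V → ℕ} (w : V → ℕ) (hsym : ∀ u v, k u v = k v u)
    (hconn : (graphOf k).Connected) {A : Finset V}
    (hmem : ∀ v : V, v ∈ A ↔ Quotient.mk (contractSetoid k) v ∈ imageA k A) :
    wA k w A = wA (k2 k) (w2 k w) (imageA k A) := by
  rw [wA, wA]
  rw [sum_fiber (imageA k A) A hmem
    (fun v => 2 * (w v : ℤ) - 2 + 2 * (k v v : ℤ) + ∑ u ∈ Finset.univ.erase v, (k u v : ℤ))]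
  exact Finset.sum_congr rfl (fun c _ => (class_term w hsym hconn c).symm)

end Stmt7Aux
namespace Stmt7Aux
variable {V : Type} [Fintype V] [DecidableEq V]
open SimpleGraph Finset

lemma twice_genus {k : V → V → ℕ} (hsym : ∀ u v, k u v = k v u) (w : V → ℕ) :
    wA k w Finset.univ = 2 * genus k w - 2 := by
  have heven := even_offdiag_sum hsym (Finset.univ : Finset V)
  have hS : ∑ v : V, ∑ u ∈ Finset.univ.erase v, (k u v : ℤ)
      = ((∑ u : V, ∑ v ∈ Finset.univ.erase u, k u v : ℕ) : ℤ) := by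
    push_cast
    exact Finset.sum_congr rfl (fun v _ => Finset.sum_congr rfl (fun u _ => by rw [hsym u v]))
  have h2 : 2 * (numEdges k : ℤ) = 2 * (∑ v : V, (k v v : ℤ))
      + ((∑ u : V, ∑ v ∈ Finset.univ.erase u, k u v : ℕ) : ℤ) := by
    have hn : 2 * numEdges k = 2 * (∑ v : V, k v v)
        + (∑ u : V, ∑ v ∈ Finset.univ.erase u, k u v) := by
      rw [numEdges, Nat.mul_add, Nat.two_mul_div_two_of_even heven]
    exact_mod_cast congrArg (fun n : ℕ => (n : ℤ)) hn
  have f3 : wA k w Finset.univ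
      = 2 * (∑ v : V, (w v : ℤ)) - 2 * ((Fintype.card V : ℕ) : ℤ)
        + 2 * (∑ v : V, (k v v : ℤ))
        + ∑ v : V, ∑ u ∈ Finset.univ.erase v, (k u v : ℤ) := by
    rw [wA, Finset.sum_add_distrib, Finset.sum_add_distrib, Finset.sum_sub_distrib,
      Finset.sum_const, ← Finset.mul_sum, ← Finset.mul_sum, Finset.card_univ]
    push_cast
    ring
  rw [f3, genus]
  linarith [hS, h2]

lemma imageA_univ (k : V → V → ℕ) : imageA k (Finset.univ : Finset V) = Finset.univ := by
  apply Finset.eq_univ_of_forall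
  intro c
  obtain ⟨v, rfl⟩ := Quotient.exists_rep c
  exact mem_imageA_of_mem (Finset.mem_univ v)

lemma genus_eq {k : V → V → ℕ} (w : V → ℕ) (hsym : ∀ u v, k u v = k v u)
    (hconn : (graphOf k).Connected) :
    genus k w = genus (k2 k) (w2 k w) := by
  have h1 := twice_genus hsym w
  have h2 := twice_genus (k2_symm hsym) (w2 k w)
  have h4 := wA_eq w hsym hconn (A := Finset.univ)
    (fun v => by simp [imageA_univ k]; exact Finset.mem_univ (α := V2 k) _)
  rw [imageA_univ k] at h4
  linarith

end Stmt7Aux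
namespace Stmt7Aux
variable {V : Type} [Fintype V] [DecidableEq V]
open SimpleGraph Finset

lemma exists_pos_of_sum_pos {α : Type*} {s : Finset α} {f : α → ℕ}
    (h : 0 < ∑ i ∈ s, f i) : ∃ i ∈ s, 0 < f i := by
  by_contra h'
  push_neg at h'
  have hz : ∑ i ∈ s, f i = 0 :=
    Finset.sum_eq_zero (fun i hi => Nat.le_zero.mp (h' i hi))
  omega

lemma k2_pos_of {k : V → V → ℕ} {u v : V}
    (hne : Quotient.mk (contractSetoid k) u ≠ Quotient.mk (contractSetoid k) v)
    (hpos : 0 < k u v) :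
    0 < k2 k (Quotient.mk (contractSetoid k) u) (Quotient.mk (contractSetoid k) v) := by
  unfold k2
  split_ifs with hh
  · exact absurd hh hne
  calc 0 < k u v := hpos
    _ ≤ ∑ v' ∈ fiber k (Quotient.mk (contractSetoid k) v), k u v' :=
        Finset.single_le_sum (fun _ _ => Nat.zero_le _) (mem_fiber_iff.mpr rfl)
    _ ≤ _ :=
        Finset.single_le_sum
          (f := fun u' => ∑ v' ∈ fiber k (Quotient.mk (contractSetoid k) v), k u' v')
          (fun _ _ => Nat.zero_le _) (mem_fiber_iff.mpr rfl)

lemma exists_edge {k : V → V → ℕ} {c c' : V2 k} (hne : c ≠ c') (hpos : 0 < k2 k c c') :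
    ∃ u ∈ fiber k c, ∃ v ∈ fiber k c', 0 < k u v := by
  rw [k2, if_neg hne] at hpos
  obtain ⟨u, hu, hupos⟩ := exists_pos_of_sum_pos hpos
  obtain ⟨v, hv, hvpos⟩ := exists_pos_of_sum_pos hupos
  exact ⟨u, hu, v, hv, hvpos⟩

lemma isConnectedSubset_iff {k : V → V → ℕ} (hsym : ∀ u v, k u v = k v u) {A : Finset V}
    (hsat : ∀ u ∈ A, ∀ v : V,
      Quotient.mk (contractSetoid k) v = Quotient.mk (contractSetoid k) u → v ∈ A) :
    IsConnectedSubset k A ↔ IsConnectedSubset (k2 k) (imageA k A) := by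
  classical
  set A2 : Finset (V2 k) := imageA k A with hA2
  have h_inA : ∀ {c : V2 k} {u : V}, c ∈ A2 → u ∈ fiber k c → u ∈ A := by
    intro c u hc hu
    obtain ⟨a, ha, hac⟩ := exists_of_mem_imageA hc
    exact hsat a ha u ((mem_fiber_iff.mp hu).trans hac.symm)
  -- same-class reachability inside A
  have same_class_reach : ∀ {x y : V},
      Relation.EqvGen (fun a b => IsBridge k a b) x y →
      ∀ (hx : x ∈ (A : Set V)) (hy : y ∈ (A : Set V)),
        ((graphOf k).induce (A : Set V)).Reachable ⟨x, hx⟩ ⟨y, hy⟩ := by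
    intro x y h
    induction h with
    | rel a b hab =>
      intro ha hb
      refine SimpleGraph.Adj.reachable ?_
      show (graphOf k).Adj a b
      exact ⟨hab.1, Or.inl (by rw [hab.2.1]; norm_num)⟩
    | refl a => intro ha hb; exact SimpleGraph.Reachable.refl _
    | symm a b hab ih => intro ha hb; exact (ih hb ha).symm
    | trans a b c hab hbc ih1 ih2 =>
      intro ha hc
      have hmkb : Quotient.mk (contractSetoid k) b = Quotient.mk (contractSetoid k) a :=
        (Quotient.sound hab : Quotient.mk (contractSetoid k) a
          = Quotient.mk (contractSetoid k) b).symm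
      have hb : b ∈ A := hsat a ha b hmkb
      exact (ih1 ha hb).trans (ih2 hb hc)
  have hmA2 : ∀ v : V, v ∈ A → Quotient.mk (contractSetoid k) v ∈ (A2 : Set (V2 k)) :=
    fun v hv => mem_imageA_of_mem hv
  constructor
  · -- forward
    intro hA
    have hne : Nonempty ↥(A2 : Set (V2 k)) := by
      obtain ⟨x⟩ := hA.nonempty
      exact ⟨⟨Quotient.mk (contractSetoid k) ↑x, hmA2 _ x.2⟩⟩
    have push : ∀ {x y : ↥(A : Set V)} (p : ((graphOf k).induce (A : Set V)).Walk x y),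
        ((graphOf (k2 k)).induce (A2 : Set (V2 k))).Reachable
          ⟨Quotient.mk (contractSetoid k) ↑x, hmA2 _ x.2⟩
          ⟨Quotient.mk (contractSetoid k) ↑y, hmA2 _ y.2⟩ := by
      intro x y p
      induction p with
      | nil => exact SimpleGraph.Reachable.refl _
      | @cons x z y h p ih =>
        by_cases hq : Quotient.mk (contractSetoid k) (x : V) = Quotient.mk (contractSetoid k) (z : V)
        · have he : (⟨Quotient.mk (contractSetoid k) (x : V), hmA2 _ x.2⟩ :
              ↥(A2 : Set (V2 k))) = ⟨Quotient.mk (contractSetoid k) (z : V), hmA2 _ z.2⟩ :=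
            Subtype.ext hq
          rw [he]
          exact ih
        · refine (SimpleGraph.Adj.reachable ?_).trans ih
          show (graphOf (k2 k)).Adj (Quotient.mk (contractSetoid k) (x : V))
            (Quotient.mk (contractSetoid k) (z : V))
          have hadj : (graphOf k).Adj (x : V) (z : V) := h
          obtain ⟨hne', hpos⟩ := hadj
          have hpos' : 0 < k (x : V) (z : V) := by
            cases hpos with
            | inl h => exact h
            | inr h => rw [hsym]; exact h
          exact ⟨hq, Or.inl (k2_pos_of hq hpos')⟩
    show ((graphOf (k2 k)).induce (A2 : Set (V2 k))).Connected
    rw [SimpleGraph.connected_iff]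
    refine ⟨?_, hne⟩
    rintro ⟨c, hc⟩ ⟨c', hc'⟩
    obtain ⟨u, hu, huc⟩ := exists_of_mem_imageA (Finset.mem_coe.mp hc)
    obtain ⟨v, hv, hvc⟩ := exists_of_mem_imageA (Finset.mem_coe.mp hc')
    obtain ⟨p⟩ := hA.preconnected ⟨u, Finset.mem_coe.mpr hu⟩ ⟨v, Finset.mem_coe.mpr hv⟩
    have hr := push p
    have e1 : (⟨Quotient.mk (contractSetoid k) u, hmA2 _ hu⟩ : ↥(A2 : Set (V2 k)))
        = ⟨c, hc⟩ := Subtype.ext huc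
    have e2 : (⟨Quotient.mk (contractSetoid k) v, hmA2 _ hv⟩ : ↥(A2 : Set (V2 k)))
        = ⟨c', hc'⟩ := Subtype.ext hvc
    rwa [e1, e2] at hr
  · -- backward
    intro hA2c
    have hne : Nonempty ↥(A : Set V) := by
      obtain ⟨c⟩ := hA2c.nonempty
      obtain ⟨u, hu, _⟩ := exists_of_mem_imageA (Finset.mem_coe.mp c.2)
      exact ⟨⟨u, Finset.mem_coe.mpr hu⟩⟩
    have pull : ∀ {a b : ↥(A2 : Set (V2 k))}
        (p : ((graphOf (k2 k)).induce (A2 : Set (V2 k))).Walk a b),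
        ∀ {x y : V} (hx : x ∈ A) (hy : y ∈ A),
          Quotient.mk (contractSetoid k) x = (a : V2 k) →
          Quotient.mk (contractSetoid k) y = (b : V2 k) →
          ((graphOf k).induce (A : Set V)).Reachable
            ⟨x, Finset.mem_coe.mpr hx⟩ ⟨y, Finset.mem_coe.mpr hy⟩ := by
      intro a b p
      induction p with
      | nil =>
        intro x y hx hy hxa hyb
        exact same_class_reach (Quotient.exact (hxa.trans hyb.symm)) _ _
      | @cons a z b h p ih =>
        intro x y hx hy hxa hyb
        have hadj : (graphOf (k2 k)).Adj (a : V2 k) (z : V2 k) := h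
        obtain ⟨hne', hpos⟩ := hadj
        have hpos' : 0 < k2 k (a : V2 k) (z : V2 k) := by
          cases hpos with
          | inl h => exact h
          | inr h => rw [k2_symm hsym]; exact h
        obtain ⟨u, hu, v, hv, huv⟩ := exists_edge hne' hpos'
        have huA : u ∈ A := h_inA (Finset.mem_coe.mp a.2) hu
        have hvA : v ∈ A := h_inA (Finset.mem_coe.mp z.2) hv
        have r1 := same_class_reach
          (Quotient.exact (hxa.trans (mem_fiber_iff.mp hu).symm))
          (Finset.mem_coe.mpr hx) (Finset.mem_coe.mpr huA)
        have r2 : ((graphOf k).induce (A : Set V)).Reachable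
            ⟨u, Finset.mem_coe.mpr huA⟩ ⟨v, Finset.mem_coe.mpr hvA⟩ := by
          refine SimpleGraph.Adj.reachable ?_
          show (graphOf k).Adj u v
          refine ⟨?_, Or.inl huv⟩
          intro huveq
          exact hne' (((mem_fiber_iff.mp hu).symm.trans
            (huveq ▸ (mem_fiber_iff.mp hv))).symm ▸ rfl)
        have r3 := ih hvA hy (mem_fiber_iff.mp hv) hyb
        exact (r1.trans r2).trans r3
    show ((graphOf k).induce (A : Set V)).Connected
    rw [SimpleGraph.connected_iff]
    refine ⟨?_, hne⟩
    intro x y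
    obtain ⟨p⟩ := hA2c.preconnected
      ⟨Quotient.mk (contractSetoid k) (x : V), hmA2 _ (Finset.mem_coe.mp x.2)⟩
      ⟨Quotient.mk (contractSetoid k) (y : V), hmA2 _ (Finset.mem_coe.mp y.2)⟩
    have := pull p (Finset.mem_coe.mp x.2) (Finset.mem_coe.mp y.2) rfl rfl
    exact this
end Stmt7Aux
/-- If `A ⊆ V` is a union of `≈`-classes with image `A² = φ(A)`,
then `δ_A = δ_{A²}`, `w_A = w_{A²}`, `m_A(d) = m_{A²}(d)` for every `d`, and
`A` is connected in `Γ` iff `A²` is connected in `Γ²`. -/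
theorem stmt7 (V : Type) [Fintype V] [DecidableEq V] (k : V → V → ℕ) (w : V → ℕ)
    (hsym : ∀ u v, k u v = k v u) (hconn : (graphOf k).Connected)
    (hg : 2 ≤ genus k w) (A : Finset V)
    (hsat : ∀ u ∈ A, ∀ v : V,
      Quotient.mk (contractSetoid k) v = Quotient.mk (contractSetoid k) u → v ∈ A) :
    deltaA k A = deltaA (k2 k) (A.image (fun v => Quotient.mk (contractSetoid k) v)) ∧
    wA k w A = wA (k2 k) (w2 k w) (A.image (fun v => Quotient.mk (contractSetoid k) v)) ∧
    (∀ D : ℤ, mA k w D A =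
      mA (k2 k) (w2 k w) D (A.image (fun v => Quotient.mk (contractSetoid k) v))) ∧
    (IsConnectedSubset k A ↔
      IsConnectedSubset (k2 k) (A.image (fun v => Quotient.mk (contractSetoid k) v))) := by
  have hmem := Stmt7Aux.mem_iff_of_sat hsat
  have hdelta := Stmt7Aux.deltaA_eq hmem
  have hwa := Stmt7Aux.wA_eq w hsym hconn hmem
  have hgen := Stmt7Aux.genus_eq w hsym hconn
  refine ⟨hdelta, hwa, ?_, Stmt7Aux.isConnectedSubset_iff hsym hsat⟩
  intro D
  rw [mA, mA, hdelta, hwa, hgen]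
end
end

section
/- Let (Γ,w) be a stable weighted graph of genus g ≥ 2 and d an integer. For a balanced multidegree d of total degree d on (Γ,w), define α(d) : V² → ℤ by α(d)(c) = Σ_{v∈c} d(v). Then α(d) is a balanced multidegree of total degree d on the contracted weighted graph (Γ²,w²); thus α defines a map B̄_d(Γ,w) → B̄_d(Γ²,w²). -/
open Finset

noncomputable section
open scoped Classical

variable {V : Type} [Fintype V] [DecidableEq V]

/-! ### Auxiliary lemmas for Statement 8 -/

namespace Stmt8Aux

lemma removeEdge_comm (k : V → V → ℕ) (a b : V) : removeEdge k a b = removeEdge k b a := by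
  funext u v
  unfold removeEdge
  by_cases h : (u = a ∧ v = b) ∨ (u = b ∧ v = a)
  · rw [if_pos h, if_pos h.symm]
  · rw [if_neg h, if_neg (fun hc => h hc.symm)]

lemma isBridge_symm {k : V → V → ℕ} (hsym : ∀ u v, k u v = k v u) {a b : V}
    (h : IsBridge k a b) : IsBridge k b a := by
  obtain ⟨hne, h1, hc⟩ := h
  exact ⟨hne.symm, (hsym b a).trans h1, by rwa [removeEdge_comm]⟩

/-- The simple graph whose edges are the bridges of the multigraph `k`. -/
def BG (k : V → V → ℕ) : SimpleGraph V where
  Adj u v := IsBridge k u v ∨ IsBridge k v u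
  symm := ⟨fun u v h => h.symm⟩
  loopless := ⟨fun v h => by
    rcases h with h | h
    · exact h.1 rfl
    · exact h.1 rfl⟩

lemma BG_adj {k : V → V → ℕ} (hsym : ∀ u v, k u v = k v u) {u v : V} :
    (BG k).Adj u v ↔ IsBridge k u v :=
  ⟨fun h => h.elim id (fun h' => isBridge_symm hsym h'), Or.inl⟩

lemma reachable_of_eqvGen {k : V → V → ℕ} {u v : V}
    (h : Relation.EqvGen (IsBridge k) u v) : (BG k).Reachable u v := by
  induction h with
  | rel a b hab => exact SimpleGraph.Adj.reachable (Or.inl hab)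
  | refl a => exact SimpleGraph.Reachable.refl a
  | symm a b _ ih => exact ih.symm
  | trans a b c _ _ ih1 ih2 => exact ih1.trans ih2

lemma eqvGen_of_walk {k : V → V → ℕ} : ∀ {u v : V}, (BG k).Walk u v →
    Relation.EqvGen (IsBridge k) u v := by
  intro u v p
  induction p with
  | nil => exact Relation.EqvGen.refl _
  | cons h q ih =>
    refine Relation.EqvGen.trans _ _ _ ?_ ih
    rcases h with h | h
    · exact Relation.EqvGen.rel _ _ h
    · exact Relation.EqvGen.symm _ _ (Relation.EqvGen.rel _ _ h)

lemma mk_eq_iff_reachable {k : V → V → ℕ} {u v : V} :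
    Quotient.mk (contractSetoid k) u = Quotient.mk (contractSetoid k) v ↔
      (BG k).Reachable u v := by
  rw [Quotient.eq]
  constructor
  · exact reachable_of_eqvGen
  · intro h
    exact h.elim eqvGen_of_walk

lemma reachable_mono_aux {G H : SimpleGraph V}
    (key : ∀ x y, G.Adj x y → H.Reachable x y) :
    ∀ {u v : V}, G.Walk u v → H.Reachable u v := by
  intro u v p
  induction p with
  | nil => exact SimpleGraph.Reachable.refl _
  | cons h q ih => exact (key _ _ h).trans ih

lemma removeEdge_connected {k : V → V → ℕ} (hconn : (graphOf k).Connected) {a b : V}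
    (hre : (graphOf (removeEdge k a b)).Reachable a b) :
    (graphOf (removeEdge k a b)).Connected := by
  have key : ∀ x y : V, (graphOf k).Adj x y → (graphOf (removeEdge k a b)).Reachable x y := by
    intro x y hxy
    by_cases hc : (x = a ∧ y = b) ∨ (x = b ∧ y = a)
    · rcases hc with ⟨rfl, rfl⟩ | ⟨rfl, rfl⟩
      · exact hre
      · exact hre.symm
    · refine SimpleGraph.Adj.reachable ?_
      refine ⟨hxy.1, ?_⟩
      have h1 : removeEdge k a b x y = k x y := if_neg hc
      have h2 : removeEdge k a b y x = k y x := if_neg (by tauto)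
      rw [h1, h2]
      exact hxy.2
  haveI hne : Nonempty V := hconn.nonempty
  refine ⟨fun x y => ?_⟩
  obtain ⟨p⟩ := hconn.preconnected x y
  exact reachable_mono_aux key p

lemma walk_avoid {k : V → V → ℕ} (hsym : ∀ u v, k u v = k v u) {a b : V} :
    ∀ {x y : V} (p : (BG k).Walk x y), s(a, b) ∉ p.edges →
      (graphOf (removeEdge k a b)).Reachable x y := by
  intro x y p
  induction p with
  | nil => intro _; exact SimpleGraph.Reachable.refl _
  | @cons x z y h q ih =>
    intro hmem
    rw [SimpleGraph.Walk.edges_cons, List.mem_cons] at hmem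
    push_neg at hmem
    obtain ⟨hne, hq⟩ := hmem
    refine SimpleGraph.Reachable.trans ?_ (ih hq)
    have hb : IsBridge k x z := (BG_adj hsym).1 h
    refine SimpleGraph.Adj.reachable ⟨hb.1, Or.inl ?_⟩
    have hcnd : ¬ ((x = a ∧ z = b) ∨ (x = b ∧ z = a)) := by
      intro hc
      apply hne
      rw [Sym2.eq_iff]
      tauto
    show 0 < removeEdge k a b x z
    unfold removeEdge
    rw [if_neg hcnd, hb.2.1]
    norm_num

lemma BG_acyclic {k : V → V → ℕ} (hsym : ∀ u v, k u v = k v u)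
    (hconn : (graphOf k).Connected) : (BG k).IsAcyclic := by
  rw [SimpleGraph.isAcyclic_iff_forall_adj_isBridge]
  intro a b hab
  have hbr : IsBridge k a b := (BG_adj hsym).1 hab
  rw [SimpleGraph.isBridge_iff]
  refine fun hre => ?_
  rw [SimpleGraph.reachable_delete_edges_iff_exists_walk] at hre
  obtain ⟨p, hp⟩ := hre
  exact hbr.2.2 (removeEdge_connected hconn (walk_avoid hsym p hp))

end Stmt8Aux
namespace Stmt8Aux

lemma mem_fiber_iff {k : V → V → ℕ} {c : V2 k} {v : V} :
    v ∈ fiber k c ↔ Quotient.mk (contractSetoid k) v = c := by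
  simp [fiber]

lemma adj_mem_fiber {k : V → V → ℕ} {c : V2 k} {u v : V}
    (h : (BG k).Adj u v) (hv : v ∈ fiber k c) : u ∈ fiber k c := by
  rw [mem_fiber_iff] at hv ⊢
  rw [← hv]
  exact mk_eq_iff_reachable.2 h.reachable

lemma induce_reachable {G : SimpleGraph V} {s : Set V} :
    ∀ {x y : V} (p : G.Walk x y), (∀ z ∈ p.support, z ∈ s) →
      ∀ (hx : x ∈ s) (hy : y ∈ s), (G.induce s).Reachable ⟨x, hx⟩ ⟨y, hy⟩ := by
  intro x y p
  induction p with
  | nil => intro _ hx hy; exact SimpleGraph.Reachable.refl _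
  | @cons x z y h q ih =>
    intro hs hx hy
    have hz : z ∈ s := hs z (by simp [SimpleGraph.Walk.support_cons])
    refine SimpleGraph.Reachable.trans (SimpleGraph.Adj.reachable ?_) (ih ?_ hz hy)
    · exact h
    · intro u hu
      exact hs u (by simp [SimpleGraph.Walk.support_cons, hu])

lemma sum_bridge_degree {k : V → V → ℕ} (hsym : ∀ u v, k u v = k v u)
    (hconn : (graphOf k).Connected) (c : V2 k) :
    ∑ u ∈ fiber k c, ∑ v ∈ (fiber k c).erase u, (if IsBridge k u v then (k u v : ℤ) else 0)
      = 2 * ((fiber k c).card : ℤ) - 2 := by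
  set F := fiber k c with hF
  -- Step A: the inner sum is the degree in the bridge graph
  have hA : ∀ u ∈ F, ∑ v ∈ F.erase u, (if IsBridge k u v then (k u v : ℤ) else 0)
      = ((BG k).degree u : ℤ) := by
    intro u hu
    have h1 : ∀ v : V, (if IsBridge k u v then (k u v : ℤ) else 0)
        = (if (BG k).Adj u v then 1 else 0) := by
      intro v
      by_cases hb : IsBridge k u v
      · rw [if_pos hb, if_pos ((BG_adj hsym).2 hb), hb.2.1]
        norm_num
      · rw [if_neg hb, if_neg (fun ha => hb ((BG_adj hsym).1 ha))]
    simp only [h1]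
    have h2 : ∑ v ∈ F.erase u, (if (BG k).Adj u v then (1 : ℤ) else 0)
        = ∑ v ∈ Finset.univ, (if (BG k).Adj u v then (1 : ℤ) else 0) := by
      apply Finset.sum_subset (Finset.subset_univ _)
      intro v _ hv
      rw [if_neg]
      intro ha
      exact hv (Finset.mem_erase.2 ⟨ha.ne', adj_mem_fiber ha.symm hu⟩)
    rw [h2, Finset.sum_boole]
    congr 1
    rw [SimpleGraph.degree, SimpleGraph.neighborFinset_eq_filter]
  -- Step B: the induced graph on the fiber is a tree
  obtain ⟨v₀, hv₀⟩ := Quotient.mk_surjective c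
  have hv₀F : v₀ ∈ F := mem_fiber_iff.2 hv₀
  set s : Set V := ↑F with hs
  have hmem : ∀ x : V, x ∈ s ↔ x ∈ F := fun x => Finset.mem_coe
  have hacyc : ((BG k).induce s).IsAcyclic := by
    intro v cyc hcyc
    have hinj : Function.Injective ⇑(SimpleGraph.Embedding.induce (G := BG k) s).toHom :=
      Subtype.val_injective
    exact BG_acyclic hsym hconn _ (hcyc.map hinj)
  have hconn' : ((BG k).induce s).Connected := by
    haveI : Nonempty ↥s := ⟨⟨v₀, (hmem v₀).2 hv₀F⟩⟩
    refine ⟨?_⟩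
    rintro ⟨x, hx⟩ ⟨y, hy⟩
    have hxc : Quotient.mk (contractSetoid k) x = c := mem_fiber_iff.1 ((hmem x).1 hx)
    have hyc : Quotient.mk (contractSetoid k) y = c := mem_fiber_iff.1 ((hmem y).1 hy)
    obtain ⟨p⟩ := mk_eq_iff_reachable.1 (hxc.trans hyc.symm)
    refine induce_reachable p ?_ hx hy
    intro z hz
    have hr : (BG k).Reachable x z := (p.takeUntil z hz).reachable
    have : Quotient.mk (contractSetoid k) z = c := (mk_eq_iff_reachable.2 hr).symm.trans hxc
    exact (hmem z).2 (mem_fiber_iff.2 this)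
  have htree : ((BG k).induce s).IsTree := ⟨hconn', hacyc⟩
  have hcard := htree.card_edgeFinset
  have hcards : Fintype.card ↥s = F.card := by
    rw [Fintype.card_congr (Equiv.subtypeEquivRight hmem), Fintype.card_coe]
  -- Step C: degree transfer
  have hdeg : ∀ (x : ↥s), ((BG k).induce s).degree x = (BG k).degree (x : V) := by
    rintro ⟨x, hx⟩
    rw [SimpleGraph.degree, SimpleGraph.degree]
    refine Finset.card_bij' (fun u _ => (u : V))
      (fun u hu => ⟨u, (hmem u).2 (adj_mem_fiber (by
        rw [SimpleGraph.mem_neighborFinset] at hu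
        exact hu.symm) ((hmem x).1 hx))⟩) ?_ ?_ ?_ ?_
    · rintro ⟨a, ha⟩ haa
      rw [SimpleGraph.mem_neighborFinset] at haa ⊢
      exact haa
    · intro a ha
      rw [SimpleGraph.mem_neighborFinset] at ha ⊢
      exact ha
    · rintro ⟨a, ha⟩ _
      rfl
    · intro a _
      rfl
  have hsum := SimpleGraph.sum_degrees_eq_twice_card_edges ((BG k).induce s)
  have hsum2 : ∑ u ∈ F, (BG k).degree u = 2 * ((BG k).induce s).edgeFinset.card := by
    rw [← hsum]
    rw [← Finset.sum_coe_sort F (fun u => (BG k).degree u)]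
    exact (Fintype.sum_equiv (Equiv.subtypeEquivRight hmem).symm _ _
      (fun x => by rw [hdeg]; rfl)).symm
  have hnat : ∑ u ∈ F, (BG k).degree u + 2 = 2 * F.card := by omega
  rw [Finset.sum_congr rfl hA]
  have := congrArg (Nat.cast : ℕ → ℤ) hnat
  push_cast at this ⊢
  linarith

lemma even_offdiag_sum (f : V → V → ℕ) (hf : ∀ u v, f u v = f v u) (s : Finset V) :
    Even (∑ u ∈ s, ∑ v ∈ s.erase u, f u v) := by
  induction s using Finset.induction_on with
  | empty => simp
  | @insert a s ha ih =>
    have h1 : (insert a s).erase a = s := Finset.erase_insert ha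
    have h2 : ∀ u ∈ s, (insert a s).erase u = insert a (s.erase u) := by
      intro u hu
      rw [Finset.erase_insert_of_ne (fun h => ha (by rw [h]; exact hu))]
    rw [Finset.sum_insert ha, h1]
    have h3 : ∑ u ∈ s, ∑ v ∈ (insert a s).erase u, f u v
        = ∑ u ∈ s, (f u a + ∑ v ∈ s.erase u, f u v) := by
      refine Finset.sum_congr rfl (fun u hu => ?_)
      rw [h2 u hu, Finset.sum_insert (fun h => ha (Finset.mem_of_mem_erase h))]
    rw [h3, Finset.sum_add_distrib]
    have h4 : ∑ u ∈ s, f u a = ∑ v ∈ s, f a v := Finset.sum_congr rfl (fun u _ => hf u a)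
    rw [h4, ← add_assoc]
    exact Even.add ⟨∑ v ∈ s, f a v, rfl⟩ ih

lemma offdiag_comm (f : V → V → ℤ) :
    ∑ v, ∑ u ∈ Finset.univ.erase v, f u v = ∑ u, ∑ v ∈ Finset.univ.erase u, f u v := by
  have h1 : ∀ v : V, ∑ u ∈ Finset.univ.erase v, f u v = (∑ u, f u v) - f v v := fun v =>
    Finset.sum_erase_eq_sub (Finset.mem_univ v)
  have h2 : ∀ u : V, ∑ v ∈ Finset.univ.erase u, f u v = (∑ v, f u v) - f u u := fun u =>
    Finset.sum_erase_eq_sub (Finset.mem_univ u)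
  simp only [h1, h2, Finset.sum_sub_distrib]
  rw [Finset.sum_comm]

lemma wA_univ (k : V → V → ℕ) (hsym : ∀ u v, k u v = k v u) (w : V → ℕ) :
    wA k w Finset.univ = 2 * genus k w - 2 := by
  obtain ⟨m, hm⟩ := even_offdiag_sum k hsym Finset.univ
  have hdiv : (∑ u, ∑ v ∈ Finset.univ.erase u, k u v) / 2 = m := by omega
  have hcast : ∑ u : V, ∑ v ∈ Finset.univ.erase u, (k u v : ℤ) = 2 * (m : ℤ) := by
    have := congrArg (Nat.cast : ℕ → ℤ) hm
    push_cast at this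
    rw [this]
    ring
  unfold wA genus numEdges
  rw [hdiv]
  simp only [Finset.sum_add_distrib, Finset.sum_sub_distrib, Finset.sum_const,
    Finset.card_univ, nsmul_eq_mul]
  rw [offdiag_comm (fun u v => (k u v : ℤ)), hcast]
  push_cast
  rw [← Finset.mul_sum, ← Finset.mul_sum]
  ring

end Stmt8Aux
namespace Stmt8Aux

lemma sum_fiber_eq {k : V → V → ℕ} (A2 : Finset (V2 k)) (f : V → ℤ) :
    ∑ c ∈ A2, ∑ v ∈ fiber k c, f v
      = ∑ v ∈ Finset.univ.filter (fun v => Quotient.mk (contractSetoid k) v ∈ A2), f v := by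
  induction A2 using Finset.induction_on with
  | empty =>
    simp
    exact (Finset.sum_eq_zero (fun v hv => absurd (Finset.mem_filter.1 hv).2 (Finset.notMem_empty _))).symm
  | @insert a s ha ih =>
    have hdisj : Disjoint (fiber k a)
        (Finset.univ.filter (fun v => Quotient.mk (contractSetoid k) v ∈ s)) := by
      rw [Finset.disjoint_left]
      intro v hv hv'
      rw [mem_fiber_iff] at hv
      rw [Finset.mem_filter] at hv'
      exact ha (by rw [← hv]; exact hv'.2)
    have hunion : fiber k a ∪ Finset.univ.filter (fun v => Quotient.mk (contractSetoid k) v ∈ s)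
        = Finset.univ.filter (fun v => Quotient.mk (contractSetoid k) v ∈ insert a s) := by
      ext v
      simp only [Finset.mem_union, Finset.mem_filter, Finset.mem_univ, true_and,
        Finset.mem_insert, mem_fiber_iff]
      exact (Finset.mem_insert (s := s) (b := a)).symm
    rw [Finset.sum_insert ha, ih, ← Finset.sum_union hdisj, hunion]

lemma degA_eq {k : V → V → ℕ} (d : V → ℤ) (A2 : Finset (V2 k)) :
    degA (alphaMap k d) A2
      = degA d (Finset.univ.filter (fun v => Quotient.mk (contractSetoid k) v ∈ A2)) := by
  unfold degA alphaMap
  exact sum_fiber_eq A2 d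

lemma compl_filter_eq {k : V → V → ℕ} (A2 : Finset (V2 k)) :
    (Finset.univ.filter (fun v => Quotient.mk (contractSetoid k) v ∈ A2))ᶜ
      = Finset.univ.filter (fun v => Quotient.mk (contractSetoid k) v ∈ A2ᶜ) := by
  ext v
  simp
  exact (Finset.mem_compl (s := A2)).symm

lemma deltaA_eq {k : V → V → ℕ} (A2 : Finset (V2 k)) :
    deltaA (k2 k) A2
      = deltaA k (Finset.univ.filter (fun v => Quotient.mk (contractSetoid k) v ∈ A2)) := by
  unfold deltaA
  rw [compl_filter_eq]
  have h1 : ∀ c ∈ A2, ∑ c' ∈ A2ᶜ, (k2 k c c' : ℤ)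
      = ∑ u ∈ fiber k c, ∑ c' ∈ A2ᶜ, ∑ v ∈ fiber k c', (k u v : ℤ) := by
    intro c hc
    rw [Finset.sum_comm]
    refine Finset.sum_congr rfl (fun c' hc' => ?_)
    have hne : c ≠ c' := fun h => (Finset.mem_compl.1 hc') (h ▸ hc)
    unfold k2
    rw [if_neg hne]
    push_cast
    rfl
  rw [Finset.sum_congr rfl h1, sum_fiber_eq]
  refine Finset.sum_congr rfl (fun u _ => ?_)
  exact sum_fiber_eq A2ᶜ (fun v => (k u v : ℤ))

lemma k2_symm {k : V → V → ℕ} (hsym : ∀ u v, k u v = k v u) :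
    ∀ c c' : V2 k, k2 k c c' = k2 k c' c := by
  intro c c'
  by_cases h : c = c'
  · rw [h]
  · unfold k2
    rw [if_neg h, if_neg (Ne.symm h)]
    rw [Finset.sum_comm]
    exact Finset.sum_congr rfl (fun u _ => Finset.sum_congr rfl (fun v _ => hsym v u))

lemma class_wA {k : V → V → ℕ} (hsym : ∀ u v, k u v = k v u)
    (hconn : (graphOf k).Connected) (w : V → ℕ) (c : V2 k) :
    2 * (w2 k w c : ℤ) - 2 + 2 * (k2 k c c : ℤ) + ∑ c' ∈ Finset.univ.erase c, (k2 k c' c : ℤ)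
      = ∑ v ∈ fiber k c, (2 * (w v : ℤ) - 2 + 2 * (k v v : ℤ)
          + ∑ u ∈ Finset.univ.erase v, (k u v : ℤ)) := by
  obtain ⟨m, hm⟩ := even_offdiag_sum (fun u v => if IsBridge k u v then 0 else k u v)
      (fun u v => by
        show (if IsBridge k u v then 0 else k u v) = (if IsBridge k v u then 0 else k v u)
        by_cases hb : IsBridge k u v
        · rw [if_pos hb, if_pos (isBridge_symm hsym hb)]
        · rw [if_neg hb, if_neg (fun h => hb (isBridge_symm hsym h)), hsym]) (fiber k c)
  have e1 : (w2 k w c : ℤ) = ∑ v ∈ fiber k c, (w v : ℤ) := by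
    unfold w2
    push_cast
    rfl
  have e2 : (k2 k c c : ℤ) = (∑ v ∈ fiber k c, (k v v : ℤ)) + (m : ℤ) := by
    unfold k2
    rw [if_pos rfl]
    have hdiv : (∑ u ∈ fiber k c, ∑ v ∈ (fiber k c).erase u,
        if IsBridge k u v then 0 else k u v) / 2 = m := by omega
    rw [hdiv]
    push_cast
    ring
  have e3 : ∑ c' ∈ Finset.univ.erase c, (k2 k c' c : ℤ)
      = ∑ u ∈ (fiber k c)ᶜ, ∑ v ∈ fiber k c, (k u v : ℤ) := by
    have h1 : ∀ c' ∈ Finset.univ.erase c, (k2 k c' c : ℤ)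
        = ∑ u ∈ fiber k c', ∑ v ∈ fiber k c, (k u v : ℤ) := by
      intro c' hc'
      have hne : c' ≠ c := (Finset.mem_erase.1 hc').1
      unfold k2
      rw [if_neg hne]
      push_cast
      rfl
    rw [Finset.sum_congr rfl h1, sum_fiber_eq]
    apply Finset.sum_congr _ (fun u _ => rfl)
    ext u
    simp [fiber, Finset.mem_erase]
    exact ⟨fun h => ((Finset.mem_erase (s := (Finset.univ : Finset (V2 k)))).1 h).1,
      fun h => (Finset.mem_erase (s := (Finset.univ : Finset (V2 k)))).2 ⟨h, Finset.mem_univ (α := V2 k) _⟩⟩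
  have hsnb : ∑ u ∈ fiber k c, ∑ v ∈ (fiber k c).erase u,
      (if IsBridge k u v then 0 else (k u v : ℤ)) = 2 * (m : ℤ) := by
    have hc := congrArg (Nat.cast : ℕ → ℤ) hm
    push_cast at hc
    rw [hc]
    ring
  have h4 : ∀ v ∈ fiber k c, ∑ u ∈ Finset.univ.erase v, (k u v : ℤ)
      = ∑ u ∈ (fiber k c).erase v, (k u v : ℤ) + ∑ u ∈ (fiber k c)ᶜ, (k u v : ℤ) := by
    intro v hv
    rw [Finset.sum_erase_eq_sub (Finset.mem_univ v),
      ← Finset.sum_add_sum_compl (fiber k c) (fun u => (k u v : ℤ)),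
      ← Finset.sum_erase_add (fiber k c) _ hv]
    ring
  have h5 : ∑ v ∈ fiber k c, ∑ u ∈ (fiber k c).erase v, (k u v : ℤ)
      = (2 * ((fiber k c).card : ℤ) - 2)
        + ∑ u ∈ fiber k c, ∑ v ∈ (fiber k c).erase u,
            (if IsBridge k u v then 0 else (k u v : ℤ)) := by
    have hrename : ∑ v ∈ fiber k c, ∑ u ∈ (fiber k c).erase v, (k u v : ℤ)
        = ∑ u ∈ fiber k c, ∑ v ∈ (fiber k c).erase u, (k u v : ℤ) :=
      Finset.sum_congr rfl (fun x _ => Finset.sum_congr rfl (fun y _ => by rw [hsym y x]))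
    rw [hrename]
    have hsplit : ∑ u ∈ fiber k c, ∑ v ∈ (fiber k c).erase u, (k u v : ℤ)
        = ∑ u ∈ fiber k c, ∑ v ∈ (fiber k c).erase u,
            ((if IsBridge k u v then (k u v : ℤ) else 0)
              + (if IsBridge k u v then 0 else (k u v : ℤ))) := by
      refine Finset.sum_congr rfl (fun u _ => Finset.sum_congr rfl (fun v _ => ?_))
      by_cases hb : IsBridge k u v <;> simp [hb]
    rw [hsplit]
    simp only [Finset.sum_add_distrib]
    rw [sum_bridge_degree hsym hconn c]
  have hcross : ∑ v ∈ fiber k c, ∑ u ∈ (fiber k c)ᶜ, (k u v : ℤ)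
      = ∑ u ∈ (fiber k c)ᶜ, ∑ v ∈ fiber k c, (k u v : ℤ) := Finset.sum_comm
  have hRHS : ∑ v ∈ fiber k c, (2 * (w v : ℤ) - 2 + 2 * (k v v : ℤ)
        + ∑ u ∈ Finset.univ.erase v, (k u v : ℤ))
      = 2 * (∑ v ∈ fiber k c, (w v : ℤ)) - 2 * ((fiber k c).card : ℤ)
        + 2 * (∑ v ∈ fiber k c, (k v v : ℤ))
        + ∑ v ∈ fiber k c, ∑ u ∈ (fiber k c).erase v, (k u v : ℤ)
        + ∑ v ∈ fiber k c, ∑ u ∈ (fiber k c)ᶜ, (k u v : ℤ) := by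
    rw [Finset.sum_congr rfl (fun v hv => by rw [h4 v hv] :
      ∀ v ∈ fiber k c, (2 * (w v : ℤ) - 2 + 2 * (k v v : ℤ)
          + ∑ u ∈ Finset.univ.erase v, (k u v : ℤ))
        = (2 * (w v : ℤ) - 2 + 2 * (k v v : ℤ)
          + (∑ u ∈ (fiber k c).erase v, (k u v : ℤ) + ∑ u ∈ (fiber k c)ᶜ, (k u v : ℤ))))]
    simp only [Finset.sum_add_distrib, Finset.sum_sub_distrib, Finset.sum_const,
      nsmul_eq_mul, ← Finset.mul_sum]
    ring
  rw [e1, e2, e3, hRHS, h5, hcross]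
  rw [hsnb]
  ring

lemma wA_eq {k : V → V → ℕ} (hsym : ∀ u v, k u v = k v u)
    (hconn : (graphOf k).Connected) (w : V → ℕ) (A2 : Finset (V2 k)) :
    wA (k2 k) (w2 k w) A2
      = wA k w (Finset.univ.filter (fun v => Quotient.mk (contractSetoid k) v ∈ A2)) := by
  unfold wA
  rw [← sum_fiber_eq]
  exact Finset.sum_congr rfl (fun c _ => class_wA hsym hconn w c)

lemma filter_univ_mem {k : V → V → ℕ} :
    Finset.univ.filter
      (fun v => Quotient.mk (contractSetoid k) v ∈ (Finset.univ : Finset (V2 k)))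
      = (Finset.univ : Finset V) := by
  simp
  exact fun x => Finset.mem_univ (α := V2 k) _

lemma genus_eq {k : V → V → ℕ} (hsym : ∀ u v, k u v = k v u)
    (hconn : (graphOf k).Connected) (w : V → ℕ) :
    genus (k2 k) (w2 k w) = genus k w := by
  have h1 := wA_univ (k2 k) (k2_symm hsym) (w2 k w)
  have h2 := wA_univ k hsym w
  have h3 := wA_eq hsym hconn w (Finset.univ : Finset (V2 k))
  rw [filter_univ_mem] at h3
  omega

end Stmt8Aux
/-- The pushforward `α(d)` of a balanced multidegree of total
degree `D` on `(Γ,w)` is a balanced multidegree of total degree `D` on the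
contracted weighted graph `(Γ²,w²)`. -/
theorem stmt8 (V : Type) [Fintype V] [DecidableEq V] (k : V → V → ℕ) (w : V → ℕ)
    (hsym : ∀ u v, k u v = k v u) (hstab : IsStable k w) (hg : 2 ≤ genus k w)
    (D : ℤ) (d : V → ℤ) (hbal : IsBalanced k w D d) :
    IsBalanced (k2 k) (w2 k w) D (alphaMap k d) := by
  obtain ⟨htot, hineq⟩ := hbal
  constructor
  · have h := Stmt8Aux.degA_eq d (Finset.univ : Finset (V2 k))
    rw [Stmt8Aux.filter_univ_mem] at h
    rw [h]
    exact htot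
  · intro A2
    have hmA : mA (k2 k) (w2 k w) D A2
        = mA k w D (Finset.univ.filter
            (fun v => Quotient.mk (contractSetoid k) v ∈ A2)) := by
      unfold mA
      rw [Stmt8Aux.genus_eq hsym hstab.1 w, Stmt8Aux.deltaA_eq A2,
        Stmt8Aux.wA_eq hsym hstab.1 w A2]
    rw [hmA, Stmt8Aux.degA_eq d A2]
    exact hineq _
end
end
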